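/- arXiv:2108.03977 — 7 statements merged into one kernel-verified Lean document; each statement's English description precedes it below -/
import Mathlib

section
/- Let N be a linear order, a ∈ N, and κ a regular uncountable cardinal such that N_a = {x ∈ N : x < a} contains a strictly increasing cofinal sequence of length κ. Then for any ultrafilter U on ω, the initial segment below the class of the constant sequence a in the ultrapower N^ω/U has cofinality κ. -/
open Cardinal Filter

/-- If `κ` is regular uncountable and `N_a = {x : x < a}` contains a strictly increasing
cofinal sequence of length `κ`, then for any ultrafilter `U` on `ω`, the initial segment below
the class of the constant sequence `a` in the ultrapower `N^ω/U` has cofinality `κ`. -/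
theorem stmt4 {N : Type} [LinearOrder N] (a : N) (κ : Cardinal) (hreg : κ.IsRegular)
    (hunc : aleph0 < κ) (ai : Ordinal → N)
    (hinc : ∀ i j : Ordinal, i < j → j < κ.ord → ai i < ai j)
    (hbelow : ∀ i : Ordinal, i < κ.ord → ai i < a)
    (hcof : ∀ x : N, x < a → ∃ i : Ordinal, i < κ.ord ∧ x ≤ ai i)
    (U : Ultrafilter ℕ) :
    Order.cof
        {g : Germ (U : Filter ℕ) N // g < ((fun _ : ℕ => a : ℕ → N) : Germ (U : Filter ℕ) N)}
        = κ := by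
  have hlim : Order.IsSuccLimit κ.ord := Cardinal.isSuccLimit_ord hreg.1
  have hmono : ∀ i j : Ordinal, i ≤ j → j < κ.ord → ai i ≤ ai j := by
    intro i j hij hj
    rcases hij.lt_or_eq with h | h
    · exact (hinc i j h hj).le
    · exact h ▸ le_rfl
  -- key lemma: anything below `const a` is below some `const (ai i)`
  have key : ∀ g : Germ (U : Filter ℕ) N,
      g < ((fun _ : ℕ => a : ℕ → N) : Germ (U : Filter ℕ) N) →
      ∃ i, i < κ.ord ∧ g ≤ ((fun _ : ℕ => ai i : ℕ → N) : Germ (U : Filter ℕ) N) := by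
    refine fun g => Germ.inductionOn g fun f hf => ?_
    have hflt : ∀ᶠ n in (U : Filter ℕ), f n < a := Germ.coe_lt.1 hf
    set I : ℕ → Ordinal := fun n => if h : f n < a then (hcof (f n) h).choose else 0 with hI
    have hIlt : ∀ n, I n < κ.ord := by
      intro n
      simp only [hI]
      split
      · exact (hcof (f n) ‹_›).choose_spec.1
      · exact hlim.pos
    have hsup : iSup I < κ.ord :=
      Cardinal.iSup_lt_ord_of_isRegular hreg (by simpa using hunc) hIlt
    refine ⟨iSup I, hsup, Germ.coe_le.2 ?_⟩
    filter_upwards [hflt] with n hn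
    have h1 : f n ≤ ai (I n) := by
      simp only [hI]
      rw [dif_pos hn]
      exact (hcof (f n) hn).choose_spec.2
    exact h1.trans (hmono _ _ (Ordinal.le_iSup I n) hsup)
  set T := {g : Germ (U : Filter ℕ) N //
      g < ((fun _ : ℕ => a : ℕ → N) : Germ (U : Filter ℕ) N)} with hT
  have hconst : ∀ i, i < κ.ord →
      ((fun _ : ℕ => ai i : ℕ → N) : Germ (U : Filter ℕ) N) <
        ((fun _ : ℕ => a : ℕ → N) : Germ (U : Filter ℕ) N) :=
    fun i hi => Germ.coe_lt.2 (Eventually.of_forall fun _ => hbelow i hi)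
  apply le_antisymm
  · -- upper bound
    set G : κ.ord.ToType → T := fun x =>
      ⟨((fun _ : ℕ => ai (((Ordinal.ToType.mk (o := κ.ord))).symm x).1 : ℕ → N) :
          Germ (U : Filter ℕ) N),
        hconst _ (((Ordinal.ToType.mk (o := κ.ord))).symm x).2⟩ with hG
    have hScof : ∀ x : T, ∃ y ∈ Set.range G, x ≤ y := by
      rintro ⟨g, hg⟩
      obtain ⟨i, hi, hle⟩ := key g hg
      refine ⟨G ((Ordinal.ToType.mk (o := κ.ord)) ⟨i, hi⟩), Set.mem_range_self _, ?_⟩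
      show g ≤ _
      simp only [hG, ((Ordinal.ToType.mk (o := κ.ord))).symm_apply_apply]
      exact hle
    calc Order.cof _ ≤ #(Set.range G) := Order.cof_le hScof
      _ ≤ #(κ.ord.ToType) := Cardinal.mk_range_le
      _ = κ := Cardinal.mk_ord_toType κ
  · -- lower bound
    rw [Order.le_cof_iff]
    intro S hS
    by_contra hlt
    push_neg at hlt
    have hchoice : ∀ s : S, ∃ i, i < κ.ord ∧
        (s : T).1 ≤ ((fun _ : ℕ => ai i : ℕ → N) : Germ (U : Filter ℕ) N) :=
      fun s => key (s : T).1 (s : T).2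
    choose I hIlt hIle using hchoice
    have hsup : iSup I < κ.ord :=
      Cardinal.iSup_lt_ord_of_isRegular hreg hlt hIlt
    set j := iSup I with hj
    have hjsucc : j + 1 < κ.ord := by
      rw [Ordinal.add_one_eq_succ]
      exact hlim.succ_lt hsup
    obtain ⟨s, hsS, hle⟩ := hS ⟨_, hconst (j + 1) hjsucc⟩
    have h1 : (s : T).1 ≤ ((fun _ : ℕ => ai j : ℕ → N) : Germ (U : Filter ℕ) N) := by
      refine (hIle ⟨s, hsS⟩).trans (Germ.coe_le.2 (Eventually.of_forall fun _ => ?_))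
      exact hmono _ _ (Ordinal.le_iSup I ⟨s, hsS⟩) hsup
    have h2 : ((fun _ : ℕ => ai (j + 1) : ℕ → N) : Germ (U : Filter ℕ) N) ≤
        ((fun _ : ℕ => ai j : ℕ → N) : Germ (U : Filter ℕ) N) := le_trans hle h1
    have h3 : ∀ᶠ _n in (U : Filter ℕ), ai (j + 1) ≤ ai j := Germ.coe_le.1 h2
    obtain ⟨n, hn⟩ := h3.exists
    exact absurd hn (not_le.2 (hinc j (j + 1) (lt_add_one j) hjsucc))
end

section
/- Assume 2^{ℵ₀} ≥ ℵ₂. Then there exist models M and N of the theory of dense linear orders without endpoints, of cardinalities ℵ₀ and ℵ₂ respectively (so M ≡ N), such that for no ultrafilter U on ω is M^ω/U isomorphic to N^ω/U. -/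
open Cardinal FirstOrder FirstOrder.Language Filter

noncomputable section Stmt6Aux

/-- The canonical well-order of cardinality `ℵ₁`. -/
abbrev SK1 : Type := (aleph 1).ord.ToType
/-- The canonical well-order of cardinality `ℵ₂`. -/
abbrev SK2 : Type := (aleph 2).ord.ToType

instance : Nonempty SK1 := by
  rw [Ordinal.toType_nonempty_iff_ne_zero]
  intro h0
  have := congrArg Ordinal.card h0
  rw [Cardinal.card_ord] at this
  simp at this
  exact (Cardinal.aleph_pos 1).ne' this

instance : Nonempty SK2 := by
  rw [Ordinal.toType_nonempty_iff_ne_zero]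
  intro h0
  have := congrArg Ordinal.card h0
  rw [Cardinal.card_ord] at this
  simp at this
  exact (Cardinal.aleph_pos 2).ne' this

lemma stmt6_exists_lt_bound {c : Cardinal} (hc : c.IsRegular) {ι : Type} (hι : #ι < c)
    (f : ι → c.ord.ToType) : ∃ b, ∀ i, f i < b := by
  classical
  have ho := Cardinal.isSuccLimit_ord hc.aleph0_le
  let e := Ordinal.ToType.mk (o := c.ord)
  have hg : ∀ i, ((e.symm (f i) : Set.Iio c.ord) : Ordinal) < c.ord := fun i => (e.symm (f i)).2
  have hs : (⨆ i, ((e.symm (f i) : Set.Iio c.ord) : Ordinal)) < c.ord :=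
    Cardinal.iSup_lt_ord_of_isRegular hc hι hg
  refine ⟨e ⟨Order.succ _, ho.succ_lt hs⟩, fun i => ?_⟩
  have h1 : f i = e (e.symm (f i)) := (e.apply_symm_apply _).symm
  rw [h1, e.lt_iff_lt]
  exact Subtype.mk_lt_mk.2 (lt_of_le_of_lt (Ordinal.le_iSup _ i) (Order.lt_succ _))

lemma stmt6_isRegular_aleph_two : (aleph 2).IsRegular := by
  have h := Cardinal.isRegular_aleph_succ 1
  have h2 : Order.succ (1 : Ordinal) = 2 := by norm_num
  rwa [h2] at h

lemma stmt6_aleph_one_lt_aleph_two : aleph 1 < aleph 2 :=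
  Cardinal.aleph_lt_aleph.2 one_lt_two

lemma SK2_bdd_nat (f : ℕ → SK2) : ∃ b, ∀ n, f n < b := by
  refine stmt6_exists_lt_bound stmt6_isRegular_aleph_two ?_ f
  rw [Cardinal.mk_nat]
  exact lt_trans aleph0_lt_aleph_one stmt6_aleph_one_lt_aleph_two

lemma SK1_bdd_nat (f : ℕ → SK1) : ∃ b, ∀ n, f n < b := by
  refine stmt6_exists_lt_bound Cardinal.isRegular_aleph_one ?_ f
  rw [Cardinal.mk_nat]
  exact aleph0_lt_aleph_one

lemma SK2_bdd_SK1 (f : SK1 → SK2) : ∃ b, ∀ i, f i < b := by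
  refine stmt6_exists_lt_bound stmt6_isRegular_aleph_two ?_ f
  rw [Cardinal.mk_ord_toType]
  exact stmt6_aleph_one_lt_aleph_two

/-- The big dense linear order: `(ω₁ ×ₗ ℚ)ᵒᵈ ⊕ₗ (ω₂ ×ₗ ℚ)`. -/
abbrev NN : Type := ((SK1 ×ₗ ℚ)ᵒᵈ) ⊕ₗ (SK2 ×ₗ ℚ)

def nL (a : SK1) (q : ℚ) : NN := toLex (Sum.inl (OrderDual.toDual (toLex (a, q))))
def nR (b : SK2) (q : ℚ) : NN := toLex (Sum.inr (toLex (b, q)))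

def pi1 (x : NN) : SK1 :=
  Sum.elim (fun p => (ofLex (OrderDual.ofDual p)).1) (fun _ => Classical.arbitrary SK1) (ofLex x)
def pi2 (x : NN) : SK2 :=
  Sum.elim (fun _ => Classical.arbitrary SK2) (fun p => (ofLex p).1) (ofLex x)

lemma NN_cases (x : NN) :
    (∃ a q, x = nL a q) ∨ (∃ b q, x = nR b q) := by
  obtain ⟨s, hs⟩ : ∃ s : ((SK1 ×ₗ ℚ)ᵒᵈ) ⊕ (SK2 ×ₗ ℚ), x = toLex s := ⟨ofLex x, rfl⟩
  rcases s with p | p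
  all_goals subst hs
  · exact Or.inl ⟨(ofLex (OrderDual.ofDual p)).1, (ofLex (OrderDual.ofDual p)).2, rfl⟩
  · exact Or.inr ⟨(ofLex p).1, (ofLex p).2, rfl⟩

lemma nL_le_nR (a : SK1) (q : ℚ) (b : SK2) (r : ℚ) : nL a q ≤ nR b r :=
  Sum.Lex.inl_le_inr _ _

lemma nR_le_nR {b b' : SK2} {q q' : ℚ} :
    nR b q ≤ nR b' q' ↔ toLex (b, q) ≤ toLex (b', q') := Sum.Lex.inr_le_inr_iff

lemma nR_lt_nR {b b' : SK2} {q q' : ℚ} :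
    nR b q < nR b' q' ↔ toLex (b, q) < toLex (b', q') := Sum.Lex.inr_lt_inr_iff

lemma nL_le_nL {a a' : SK1} {q q' : ℚ} :
    nL a q ≤ nL a' q' ↔ toLex (a', q') ≤ toLex (a, q) := by
  rw [nL, nL, Sum.Lex.inl_le_inl_iff, OrderDual.toDual_le_toDual]

lemma pair_lt_pair {κ : Type*} [LinearOrder κ] {a b : κ} {q r : ℚ} :
    toLex (a, q) < toLex (b, r) ↔ a < b ∨ (a = b ∧ q < r) := by
  rw [Prod.Lex.lt_iff]
  rfl

lemma le_nR_of_pi2_lt {x : NN} {b : SK2} (hb : pi2 x < b) : x ≤ nR b 0 := by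
  rcases NN_cases x with ⟨a, q, rfl⟩ | ⟨b', q, rfl⟩
  · exact nL_le_nR _ _ _ _
  · have h2 : pi2 (nR b' q) = b' := rfl
    rw [h2] at hb
    exact nR_le_nR.2 (le_of_lt (pair_lt_pair.2 (Or.inl hb)))

lemma nL_le_of_lt_pi1 {x : NN} {a : SK1} (ha : pi1 x < a) : nL a 0 ≤ x := by
  rcases NN_cases x with ⟨a', q, rfl⟩ | ⟨b', q, rfl⟩
  · have h2 : pi1 (nL a' q) = a' := rfl
    rw [h2] at ha
    exact nL_le_nL.2 (le_of_lt (pair_lt_pair.2 (Or.inl ha)))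
  · exact nL_le_nR _ _ _ _

lemma nR_mono {b b' : SK2} (hbb : b ≤ b') : nR b 0 ≤ nR b' 0 := by
  rcases lt_or_eq_of_le hbb with hlt | rfl
  · exact nR_le_nR.2 (le_of_lt (pair_lt_pair.2 (Or.inl hlt)))
  · exact le_refl _

lemma nR_strict {b b' : SK2} (hbb : b < b') : nR b 0 < nR b' 0 :=
  nR_lt_nR.2 (pair_lt_pair.2 (Or.inl hbb))

instance stmt6_dense_lex (κ : Type*) [LinearOrder κ] : DenselyOrdered (κ ×ₗ ℚ) := by
  constructor
  intro x y hxy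
  obtain ⟨⟨a, q⟩, rfl⟩ : ∃ p : κ × ℚ, x = toLex p := ⟨ofLex x, rfl⟩
  obtain ⟨⟨b, r⟩, rfl⟩ : ∃ p : κ × ℚ, y = toLex p := ⟨ofLex y, rfl⟩
  rcases pair_lt_pair.1 hxy with hlt | ⟨rfl, hlt⟩
  · exact ⟨toLex (a, q + 1), pair_lt_pair.2 (Or.inr ⟨rfl, by linarith⟩),
      pair_lt_pair.2 (Or.inl hlt)⟩
  · obtain ⟨m, hm1, hm2⟩ := exists_between hlt
    exact ⟨toLex (a, m), pair_lt_pair.2 (Or.inr ⟨rfl, hm1⟩),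
      pair_lt_pair.2 (Or.inr ⟨rfl, hm2⟩)⟩

instance stmt6_nomax_lex (κ : Type*) [LinearOrder κ] : NoMaxOrder (κ ×ₗ ℚ) := by
  constructor
  intro x
  obtain ⟨⟨a, q⟩, rfl⟩ : ∃ p : κ × ℚ, x = toLex p := ⟨ofLex x, rfl⟩
  exact ⟨toLex (a, q + 1), pair_lt_pair.2 (Or.inr ⟨rfl, by linarith⟩)⟩

instance stmt6_nomin_lex (κ : Type*) [LinearOrder κ] : NoMinOrder (κ ×ₗ ℚ) := by
  constructor
  intro x
  obtain ⟨⟨a, q⟩, rfl⟩ : ∃ p : κ × ℚ, x = toLex p := ⟨ofLex x, rfl⟩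
  exact ⟨toLex (a, q - 1), pair_lt_pair.2 (Or.inr ⟨rfl, by linarith⟩)⟩

instance : DenselyOrdered NN := by
  constructor
  intro x y hxy
  obtain ⟨s, hs⟩ : ∃ s : ((SK1 ×ₗ ℚ)ᵒᵈ) ⊕ (SK2 ×ₗ ℚ), x = toLex s := ⟨ofLex x, rfl⟩
  obtain ⟨t, ht⟩ : ∃ s : ((SK1 ×ₗ ℚ)ᵒᵈ) ⊕ (SK2 ×ₗ ℚ), y = toLex s := ⟨ofLex y, rfl⟩
  rcases s with p | p <;> rcases t with p' | p' <;> subst hs <;> subst ht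
  · have hpp : p < p' := Sum.Lex.inl_lt_inl_iff.1 hxy
    obtain ⟨m, hm1, hm2⟩ := exists_between hpp
    exact ⟨toLex (Sum.inl m), Sum.Lex.inl_lt_inl_iff.2 hm1, Sum.Lex.inl_lt_inl_iff.2 hm2⟩
  · obtain ⟨m, hm⟩ := exists_gt p
    exact ⟨toLex (Sum.inl m), Sum.Lex.inl_lt_inl_iff.2 hm, Sum.Lex.inl_lt_inr _ _⟩
  · exact absurd hxy (fun hc => Sum.Lex.not_inr_le_inl (le_of_lt hc))
  · have hpp : p < p' := Sum.Lex.inr_lt_inr_iff.1 hxy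
    obtain ⟨m, hm1, hm2⟩ := exists_between hpp
    exact ⟨toLex (Sum.inr m), Sum.Lex.inr_lt_inr_iff.2 hm1, Sum.Lex.inr_lt_inr_iff.2 hm2⟩

instance : NoMaxOrder NN := by
  constructor
  intro x
  obtain ⟨s, hs⟩ : ∃ s : ((SK1 ×ₗ ℚ)ᵒᵈ) ⊕ (SK2 ×ₗ ℚ), x = toLex s := ⟨ofLex x, rfl⟩
  rcases s with p | p <;> subst hs
  · exact ⟨toLex (Sum.inr (toLex (Classical.arbitrary SK2, 0))), Sum.Lex.inl_lt_inr _ _⟩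
  · obtain ⟨m, hm⟩ := exists_gt p
    exact ⟨toLex (Sum.inr m), Sum.Lex.inr_lt_inr_iff.2 hm⟩

instance : NoMinOrder NN := by
  constructor
  intro x
  obtain ⟨s, hs⟩ : ∃ s : ((SK1 ×ₗ ℚ)ᵒᵈ) ⊕ (SK2 ×ₗ ℚ), x = toLex s := ⟨ofLex x, rfl⟩
  rcases s with p | p <;> subst hs
  · obtain ⟨m, hm⟩ := exists_lt p
    exact ⟨toLex (Sum.inl m), Sum.Lex.inl_lt_inl_iff.2 hm⟩
  · exact ⟨toLex (Sum.inl (OrderDual.toDual (toLex (Classical.arbitrary SK1, 0)))),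
      Sum.Lex.inl_lt_inr _ _⟩

lemma mk_NN : #NN = aleph 2 := by
  have h1 : #NN = #((SK1 × ℚ) ⊕ (SK2 × ℚ)) := rfl
  rw [h1, Cardinal.mk_sum, Cardinal.mk_prod, Cardinal.mk_prod]
  simp only [Cardinal.lift_id, Cardinal.mk_ord_toType, Cardinal.mkRat]
  rw [Cardinal.mul_eq_max (aleph0_le_aleph 1) le_rfl,
    Cardinal.mul_eq_max (aleph0_le_aleph 2) le_rfl,
    max_eq_left (aleph0_le_aleph 1), max_eq_left (aleph0_le_aleph 2),
    Cardinal.add_eq_max (aleph0_le_aleph 1),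
    max_eq_right (le_of_lt stmt6_aleph_one_lt_aleph_two)]

/-- The abstract combinatorial core. -/
lemma stmt6_core {X : Type*} (le : X → X → Prop)
    (htrans : ∀ {x y z : X}, le x y → le y z → le x z)
    (E' : SK1 → X) (hE' : ∀ x, ∃ a, le x (E' a))
    (D : SK2 → X) (hDmono : ∀ {b b' : SK2}, b ≤ b' → le (D b) (D b'))
    (hDcof : ∀ x, ∃ b, le x (D b))
    (hDstrict : ∀ {b b' : SK2}, b < b' → ¬ le (D b') (D b)) : False := by
  classical
  choose hh hhle using fun b => hE' (D b)
  by_cases hfib : ∃ γ : SK1, ∀ s : SK2, ∃ b, s < b ∧ hh b = γ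
  · obtain ⟨γ, hγ⟩ := hfib
    have hub : ∀ x, le x (E' γ) := by
      intro x
      obtain ⟨b0, hb0⟩ := hDcof x
      obtain ⟨b, hb, hbe⟩ := hγ b0
      exact htrans (htrans hb0 (hDmono hb.le)) (hbe ▸ hhle b)
    obtain ⟨b1, hb1⟩ := hDcof (E' γ)
    obtain ⟨b2, hb2⟩ := SK2_bdd_nat (fun _ => b1)
    exact hDstrict (hb2 0) (htrans (hub (D b2)) hb1)
  · push_neg at hfib
    choose s hs using hfib
    obtain ⟨b, hb⟩ := SK2_bdd_SK1 s
    exact hs (hh b) b (hb _) rfl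

/-- Interpret `≤` on ordered types. -/
instance stmt6OrderStructure (A : Type*) [LE A] : Language.order.Structure A :=
  orderStructure A

attribute [-instance] stmt6OrderStructure
attribute [instance 10] stmt6OrderStructure

instance stmt6OrderedStructure (A : Type*) [LE A] : Language.order.OrderedStructure A :=
  ⟨fun _ => Iff.rfl⟩

section Ultra

variable {A : Type} [LinearOrder A] (U : Ultrafilter ℕ)

lemma stmt6_relMap_le_iff (f g : ℕ → A) :
    Structure.RelMap (L := Language.order)
      (leSymb : Language.order.Relations 2)
      ![(Quotient.mk ((U : Filter ℕ).productSetoid fun _ => A) f :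
          (U : Filter ℕ).Product fun _ => A),
        Quotient.mk ((U : Filter ℕ).productSetoid fun _ => A) g] ↔
      ∀ᶠ n in (U : Filter ℕ), f n ≤ g n := by
  have h := relMap_quotient_mk' ((U : Filter ℕ).productSetoid fun _ => A)
      (leSymb : Language.order.Relations 2) ![f, g]
  have hfg : (![(Quotient.mk ((U : Filter ℕ).productSetoid fun _ => A) f :
          (U : Filter ℕ).Product fun _ => A),
        Quotient.mk ((U : Filter ℕ).productSetoid fun _ => A) g]) =
      fun i => (⟦(![f, g]) i⟧ : Quotient ((U : Filter ℕ).productSetoid fun _ => A)) := by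
    funext i
    fin_cases i <;> rfl
  rw [hfg]
  exact h.trans Iff.rfl

end Ultra

end Stmt6Aux

/-- If `2^ℵ₀ ≥ ℵ₂`, there are models `M, N` of the theory of dense linear orders without
endpoints, of cardinalities `ℵ₀` and `ℵ₂` respectively, such that for no ultrafilter `U` on `ω`
are the ultrapowers `M^ω/U` and `N^ω/U` isomorphic. -/
theorem stmt6 (h : aleph 2 ≤ 2 ^ aleph0) :
    ∃ (M N : Type) (_ : Language.order.Structure M) (_ : Language.order.Structure N),
      M ⊨ Language.order.dlo ∧ N ⊨ Language.order.dlo ∧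
      #M = aleph0 ∧ #N = aleph 2 ∧
      ∀ U : Ultrafilter ℕ,
        ¬ Nonempty (((U : Filter ℕ).Product fun _ => M) ≃[Language.order]
            ((U : Filter ℕ).Product fun _ => N)) := by
  classical
  refine ⟨ℚ, NN, inferInstance, inferInstance, inferInstance, inferInstance,
    Cardinal.mkRat, mk_NN, ?_⟩
  rintro U ⟨g⟩
  let sQ : Setoid (ℕ → ℚ) := (U : Filter ℕ).productSetoid fun _ => ℚ
  let sN : Setoid (ℕ → NN) := (U : Filter ℕ).productSetoid fun _ => NN
  let PQ := (U : Filter ℕ).Product fun _ => ℚ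
  let PN := (U : Filter ℕ).Product fun _ => NN
  let leQ : PQ → PQ → Prop := fun x y =>
    Structure.RelMap (L := Language.order) (leSymb : Language.order.Relations 2) ![x, y]
  let leN : PN → PN → Prop := fun x y =>
    Structure.RelMap (L := Language.order) (leSymb : Language.order.Relations 2) ![x, y]
  have hleQ : ∀ f g : ℕ → ℚ, leQ (Quotient.mk sQ f) (Quotient.mk sQ g) ↔
      ∀ᶠ n in (U : Filter ℕ), f n ≤ g n := fun f g => stmt6_relMap_le_iff U f g
  have hleN : ∀ f g : ℕ → NN, leN (Quotient.mk sN f) (Quotient.mk sN g) ↔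
      ∀ᶠ n in (U : Filter ℕ), f n ≤ g n := fun f g => stmt6_relMap_le_iff U f g
  -- transitivity of leN
  have htransN : ∀ {x y z : PN}, leN x y → leN y z → leN x z := by
    intro x y z
    induction x using Quot.ind with | _ f =>
    induction y using Quot.ind with | _ f' =>
    induction z using Quot.ind with | _ f'' =>
    intro h1 h2
    refine (hleN f f'').2 ?_
    filter_upwards [(hleN f f').1 h1, (hleN f' f'').1 h2] with n hn1 hn2 using le_trans hn1 hn2
  -- negation map on PQ
  let negP : PQ → PQ := Quot.map (fun f n => -(f n))
    (fun f f' hff => hff.mono fun n hn => by simp [hn])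
  have hneg_inv : ∀ x : PQ, negP (negP x) = x := by
    intro x
    induction x using Quot.ind with | _ f =>
    exact congrArg (Quotient.mk sQ) (funext fun n => neg_neg _)
  have hneg_anti : ∀ u v : PQ, leQ u v → leQ (negP v) (negP u) := by
    intro u v
    induction u using Quot.ind with | _ f =>
    induction v using Quot.ind with | _ f' =>
    intro h1
    refine (hleQ (fun n => -(f' n)) (fun n => -(f n))).2 ?_
    filter_upwards [(hleQ f f').1 h1] with n hn using neg_le_neg hn
  -- map_rel for g and g.symm
  have hmapg : ∀ u v : PQ, leQ u v → leN (g u) (g v) := by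
    intro u v huv
    have h3 := (StrongHomClass.map_rel g (leSymb : Language.order.Relations 2) ![u, v]).2
    have h2 : (⇑g ∘ ![u, v]) = ![g u, g v] := by
      funext i; fin_cases i <;> rfl
    rw [h2] at h3
    exact h3 huv
  have hmapgs : ∀ u v : PN, leN u v → leQ (g.symm u) (g.symm v) := by
    intro u v huv
    have h3 := (StrongHomClass.map_rel g.symm (leSymb : Language.order.Relations 2) ![u, v]).2
    have h2 : (⇑g.symm ∘ ![u, v]) = ![g.symm u, g.symm v] := by
      funext i; fin_cases i <;> rfl
    rw [h2] at h3
    exact h3 huv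
  -- the order-reversing surjection on PN
  let ψ : PN → PN := fun x => g (negP (g.symm x))
  have hψsurj : ∀ y : PN, ∃ x, ψ x = y := by
    intro y
    refine ⟨g (negP (g.symm y)), ?_⟩
    show g (negP (g.symm (g (negP (g.symm y))))) = y
    rw [g.symm_apply_apply, hneg_inv, g.apply_symm_apply]
  have hψanti : ∀ u v : PN, leN u v → leN (ψ v) (ψ u) :=
    fun u v huv => hmapg _ _ (hneg_anti _ _ (hmapgs _ _ huv))
  -- the chains
  let D : SK2 → PN := fun b => Quotient.mk sN (fun _ => nR b 0)
  let E : SK1 → PN := fun a => Quotient.mk sN (fun _ => nL a 0)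
  have hDmono : ∀ {b b' : SK2}, b ≤ b' → leN (D b) (D b') := by
    intro b b' hbb
    refine (hleN _ _).2 ?_
    exact Filter.Eventually.of_forall fun n => nR_mono hbb
  have hDstrict : ∀ {b b' : SK2}, b < b' → ¬ leN (D b') (D b) := by
    intro b b' hbb hc
    obtain ⟨n, hn⟩ := ((hleN _ _).1 hc).exists
    exact absurd hn (not_le.2 (nR_strict hbb))
  have hDcof : ∀ x : PN, ∃ b, leN x (D b) := by
    intro x
    induction x using Quot.ind with | _ f =>
    obtain ⟨b, hb⟩ := SK2_bdd_nat (fun n => pi2 (f n))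
    exact ⟨b, (hleN _ _).2 (Filter.Eventually.of_forall fun n => le_nR_of_pi2_lt (hb n))⟩
  have hEcoin : ∀ x : PN, ∃ a, leN (E a) x := by
    intro x
    induction x using Quot.ind with | _ f =>
    obtain ⟨a, ha⟩ := SK1_bdd_nat (fun n => pi1 (f n))
    exact ⟨a, (hleN _ _).2 (Filter.Eventually.of_forall fun n => nL_le_of_lt_pi1 (ha n))⟩
  -- combine
  refine stmt6_core leN htransN (fun a => ψ (E a)) ?_ D hDmono hDcof hDstrict
  intro x
  obtain ⟨y, hy⟩ := hψsurj x
  obtain ⟨a, ha⟩ := hEcoin y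
  exact ⟨a, hy ▸ hψanti _ _ ha⟩
end

section
/- Assume 2^{ℵ₀} ≥ ℵ₂. Then the Keisler criterion fails: there exist elementarily equivalent structures M, N in a countable language, each of size at most 2^{ℵ₀}, such that no ultrafilter U on ω satisfies M^ω/U ≅ N^ω/U. -/
open Cardinal FirstOrder FirstOrder.Language Filter

namespace KeislerStmt7

open FirstOrder.Language.Structure Ordinal

noncomputable section

/-! ### Order facts about `Lex (α × ℚ)` -/

instance lexDense (α : Type*) [LinearOrder α] : DenselyOrdered (α ×ₗ ℚ) := by
  constructor
  intro x y hxy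
  rcases (Prod.Lex.lt_iff (x := x) (y := y)).1 hxy with h1 | ⟨h1, h2⟩
  · exact ⟨toLex ((ofLex x).1, (ofLex x).2 + 1),
      Prod.Lex.lt_iff.2 (Or.inr ⟨rfl, lt_add_one _⟩),
      Prod.Lex.lt_iff.2 (Or.inl h1)⟩
  · obtain ⟨s, hs1, hs2⟩ := exists_between h2
    exact ⟨toLex ((ofLex x).1, s), Prod.Lex.lt_iff.2 (Or.inr ⟨rfl, hs1⟩),
      Prod.Lex.lt_iff.2 (Or.inr ⟨h1, hs2⟩)⟩

instance lexNoMax (α : Type*) [LinearOrder α] : NoMaxOrder (α ×ₗ ℚ) :=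
  ⟨fun x => ⟨toLex ((ofLex x).1, (ofLex x).2 + 1),
    Prod.Lex.lt_iff.2 (Or.inr ⟨rfl, lt_add_one _⟩)⟩⟩

instance lexNoMin (α : Type*) [LinearOrder α] : NoMinOrder (α ×ₗ ℚ) :=
  ⟨fun x => ⟨toLex ((ofLex x).1, (ofLex x).2 - 1),
    Prod.Lex.lt_iff.2 (Or.inr ⟨rfl, sub_one_lt _⟩)⟩⟩

/-! ### Bounding small families in `c.ord.toType` for regular `c` -/

lemma exists_gt_of_lt_cof {c : Cardinal} (hc : c.IsRegular) {ι : Type}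
    (hι : #ι < c) (f : ι → c.ord.ToType) : ∃ b, ∀ i, f i < b := by
  have hlim : Order.IsSuccLimit c.ord := isSuccLimit_ord hc.aleph0_le
  set e := Ordinal.ToType.mk (o := c.ord) with he
  have hbd : ∀ i, ((e.symm (f i) : Set.Iio c.ord) : Ordinal) + 1 < c.ord := fun i => by
    rw [Ordinal.add_one_eq_succ]
    exact hlim.succ_lt (e.symm (f i)).2
  have hsup : (⨆ i, (((e.symm (f i) : Set.Iio c.ord) : Ordinal) + 1)) < c.ord :=
    Ordinal.iSup_lt_ord (by rwa [hc.cof_eq]) hbd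
  refine ⟨e ⟨_, hsup⟩, fun i => ?_⟩
  have h1 : e.symm (f i) < (⟨_, hsup⟩ : Set.Iio c.ord) := by
    rw [← Subtype.coe_lt_coe]
    exact lt_of_lt_of_le (lt_add_one _) (Ordinal.le_iSup _ i)
  have h2 := e.lt_iff_lt.2 h1
  rwa [OrderIso.apply_symm_apply] at h2

lemma exists_lex_bound {c : Cardinal} (hc : c.IsRegular) {ι : Type} (hι : #ι < c)
    (f : ι → (c.ord.ToType ×ₗ ℚ)) : ∃ b : c.ord.ToType, ∀ i, f i < toLex (b, 0) := by
  obtain ⟨b, hb⟩ := exists_gt_of_lt_cof hc hι (fun i => (ofLex (f i)).1)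
  exact ⟨b, fun i => Prod.Lex.lt_iff.2 (Or.inl (hb i))⟩



section Ultra

variable {u : Ultrafilter ℕ}

/-- Class of `f` in the ultrapower. -/
def mkp (u : Ultrafilter ℕ) {X : Type} (f : ℕ → X) : (u : Filter ℕ).Product fun _ => X :=
  Quotient.mk ((u : Filter ℕ).productSetoid fun _ => X) f

lemma mkp_surj {X : Type} (x : (u : Filter ℕ).Product fun _ => X) : ∃ f, mkp u f = x :=
  Quotient.exists_rep x

/-- The order relation on the ultrapower, via the language symbol. -/
def ple {X : Type} [Language.order.Structure X]
    (x y : (u : Filter ℕ).Product fun _ => X) : Prop :=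
  Structure.RelMap (leSymb : Language.order.Relations 2) ![x, y]

variable {X : Type} [LinearOrder X] [Language.order.Structure X]
  [Language.order.OrderedStructure X]

lemma ple_mkp (f g : ℕ → X) :
    ple (mkp u f) (mkp u g) ↔ ∀ᶠ n in (u : Filter ℕ), f n ≤ g n := by
  letI := (u : Filter ℕ).productSetoid (fun _ : ℕ => X)
  have h : (![mkp u f, mkp u g]) =
      fun i => (⟦![f, g] i⟧ : (u : Filter ℕ).Product fun _ => X) := by
    funext i; fin_cases i <;> rfl
  unfold ple
  rw [h]
  refine (relMap_quotient_mk' ((u : Filter ℕ).productSetoid fun _ : ℕ => X)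
    (leSymb : Language.order.Relations 2) ![f, g]).trans ?_
  exact eventually_congr (Eventually.of_forall fun n => by
    simpa using relMap_leSymb (M := X) (fun i => ![f, g] i n))

lemma ple_trans {x y z : (u : Filter ℕ).Product fun _ => X}
    (h1 : ple x y) (h2 : ple y z) : ple x z := by
  obtain ⟨f, rfl⟩ := mkp_surj x
  obtain ⟨g, rfl⟩ := mkp_surj y
  obtain ⟨k, rfl⟩ := mkp_surj z
  rw [ple_mkp] at *
  filter_upwards [h1, h2] with n a b using le_trans a b

lemma ple_const (m m' : X) :
    ple (mkp u fun _ => m) (mkp u fun _ => m') ↔ m ≤ m' := by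
  rw [ple_mkp]; simp

omit [LinearOrder X] [Language.order.OrderedStructure X] in
lemma ple_map {Y : Type} [Language.order.Structure Y]
    (g : ((u : Filter ℕ).Product fun _ => X) ≃[Language.order]
      ((u : Filter ℕ).Product fun _ => Y))
    {x y : (u : Filter ℕ).Product fun _ => X} (h : ple x y) : ple (g x) (g y) := by
  have key := StrongHomClass.map_rel g (leSymb : Language.order.Relations 2) ![x, y]
  have hxy : (g ∘ ![x, y]) = ![g x, g y] := by funext i; fin_cases i <;> rfl
  rw [hxy] at key
  exact key.2 h

end Ultra

end

end KeislerStmt7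

open KeislerStmt7 in
/-- If `2^ℵ₀ ≥ ℵ₂` then the Keisler criterion fails: there are elementarily equivalent
structures `M, N` in a countable language, each of size at most `2^ℵ₀`, such that no
ultrafilter `U` on `ω` satisfies `M^ω/U ≅ N^ω/U`. -/
theorem stmt7 (h : aleph 2 ≤ 2 ^ aleph0) :
    ∃ (L : FirstOrder.Language.{0,0}) (_ : L.card ≤ aleph0) (M N : Type)
      (_ : L.Structure M) (_ : L.Structure N),
      #M ≤ 2 ^ aleph0 ∧ #N ≤ 2 ^ aleph0 ∧ (M ≅[L] N) ∧
      ∀ U : Ultrafilter ℕ,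
        ¬ Nonempty (((U : Filter ℕ).Product fun _ => M) ≃[L]
            ((U : Filter ℕ).Product fun _ => N)) := by
  classical
  have h0 : (aleph 2 : Cardinal.{0}) ≤ 2 ^ aleph0 := by
    rw [← Cardinal.lift_le.{_}, lift_aleph, lift_two_power, lift_aleph0, Ordinal.lift_ofNat]
    exact h
  clear h
  have hreg1 : Cardinal.IsRegular (aleph 1) := isRegular_aleph_one
  have hreg2 : Cardinal.IsRegular (aleph 2) := by
    rw [show (2 : Ordinal) = 1 + 1 from one_add_one_eq_two.symm, Ordinal.add_one_eq_succ,
      aleph_succ]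
    exact isRegular_succ (aleph0_le_aleph 1)
  have hℵ1 : ℵ₀ < aleph 1 := aleph0_lt_aleph_one
  have h12 : aleph 1 < aleph 2 := aleph_lt_aleph.2 one_lt_two
  have hℵ2 : ℵ₀ < aleph 2 := hℵ1.trans h12
  set κ1 := (aleph 1).ord.ToType with hκ1
  set κ2 := (aleph 2).ord.ToType with hκ2
  letI S1 : Language.order.Structure (κ1 ×ₗ ℚ) := orderStructure _
  letI S2 : Language.order.Structure (κ2 ×ₗ ℚ) := orderStructure _
  haveI O1 : Language.order.OrderedStructure (κ1 ×ₗ ℚ) := ⟨fun _ => Iff.rfl⟩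
  haveI O2 : Language.order.OrderedStructure (κ2 ×ₗ ℚ) := ⟨fun _ => Iff.rfl⟩
  haveI : Nonempty κ1 := Ordinal.toType_nonempty_iff_ne_zero.2
    (by rw [Ne, Cardinal.ord_eq_zero]; exact (aleph0_pos.trans hℵ1).ne')
  haveI : Nonempty κ2 := Ordinal.toType_nonempty_iff_ne_zero.2
    (by rw [Ne, Cardinal.ord_eq_zero]; exact (aleph0_pos.trans hℵ2).ne')
  have hmk : ∀ (c : Cardinal), ℵ₀ ≤ c → #(c.ord.ToType ×ₗ ℚ) = c := by
    intro c hc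
    have e1 : #(c.ord.ToType ×ₗ ℚ) = #(c.ord.ToType × ℚ) := Cardinal.mk_congr (ofLex)
    rw [e1, Cardinal.mk_prod, Cardinal.lift_id, Cardinal.lift_id, mk_ord_toType,
      mk_denumerable]
    exact mul_eq_left hc hc aleph0_ne_zero
  refine ⟨Language.order, le_of_eq_of_le order.card_eq_one one_le_aleph0,
    κ1 ×ₗ ℚ, κ2 ×ₗ ℚ, S1, S2, ?_, ?_, ?_, ?_⟩
  · rw [hmk _ hℵ1.le]
    exact h12.le.trans h0
  · rw [hmk _ hℵ2.le]
    exact h0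
  · haveI : Nonempty (Lex (κ1 × ℚ)) := ⟨toLex (Classical.arbitrary κ1, 0)⟩
    haveI : Nonempty (Lex (κ2 × ℚ)) := ⟨toLex (Classical.arbitrary κ2, 0)⟩
    rw [elementarilyEquivalent_iff]
    intro φ
    rw [dlo_isComplete.realize_sentence_iff φ (Lex (κ1 × ℚ)),
      dlo_isComplete.realize_sentence_iff φ (Lex (κ2 × ℚ))]
  · rintro U ⟨g⟩
    -- for each `i : κ1`, bound `g (diag (i,0))` by a diagonal constant `cfn i` in the
    -- ultrapower of `κ2 ×ₗ ℚ`
    have key : ∀ i : κ1, ∃ m : κ2 ×ₗ ℚ,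
        ple (g (mkp U fun _ => toLex (i, (0 : ℚ)))) (mkp U fun _ => m) := by
      intro i
      obtain ⟨f, hf⟩ := mkp_surj (g (mkp U fun _ => toLex (i, (0 : ℚ))))
      obtain ⟨b, hb⟩ := exists_lex_bound hreg2 (by rw [mk_denumerable]; exact hℵ2) f
      refine ⟨toLex (b, 0), ?_⟩
      rw [← hf, ple_mkp]
      exact Eventually.of_forall fun n => (hb n).le
    choose cfn hcfn using key
    -- bound the first coordinates of all the `cfn i` by some `β : κ2`
    obtain ⟨β, hβ⟩ := exists_gt_of_lt_cof hreg2
      (by rw [hκ1, mk_ord_toType]; exact h12) (fun i => (ofLex (cfn i)).1)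
    set y : κ2 ×ₗ ℚ := toLex (β, 0) with hy
    -- `g.symm (diag y)` is below some diagonal constant `diag (m)`, and `m < (i, 0)`
    -- for some `i : κ1`
    obtain ⟨f, hf⟩ := mkp_surj (g.symm (mkp U fun _ => y))
    obtain ⟨b, hb⟩ := exists_lex_bound hreg1 (by rw [mk_denumerable]; exact hℵ1) f
    obtain ⟨i, hi⟩ := exists_gt_of_lt_cof hreg1
      (by rw [Cardinal.mk_punit]; exact one_lt_aleph0.trans hℵ1) (fun _ : PUnit => b)
    have h1 : ple (g.symm (mkp U fun _ => y)) (mkp U fun _ => toLex (i, (0 : ℚ))) := by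
      rw [← hf, ple_mkp]
      refine Eventually.of_forall fun n => le_of_lt ?_
      exact (hb n).trans (Prod.Lex.lt_iff.2 (Or.inl (hi PUnit.unit)))
    have h2 := ple_map g h1
    rw [Language.Equiv.apply_symm_apply] at h2
    have h3 : ple (mkp U fun _ => y) (mkp U fun _ => cfn i) := ple_trans h2 (hcfn i)
    have h4 : y ≤ cfn i := (ple_const _ _).1 h3
    exact absurd h4 (not_le.2 (Prod.Lex.lt_iff.2 (Or.inl (hβ i))))
end

section
/- If U is a nonprincipal ultrafilter on ω and M is an infinite structure in a countable language, then the ultrapower M^ω/U is ℵ₁-saturated. -/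
open Cardinal FirstOrder FirstOrder.Language Filter

/-- A structure is `ℵ₁`-saturated if every type over a countable set of parameters that is
finitely satisfiable in the structure is realized in it. -/
def Aleph1Saturated (L : FirstOrder.Language.{0,0}) (M : Type*) [L.Structure M] : Prop :=
  ∀ (f : ℕ → M) (Φ : Set (L.Formula (ℕ ⊕ Unit))),
    (∀ s : Finset (L.Formula (ℕ ⊕ Unit)), ↑s ⊆ Φ →
      ∃ x : M, ∀ φ ∈ s, Formula.Realize φ (Sum.elim f fun _ => x)) →
    ∃ x : M, ∀ φ ∈ Φ, Formula.Realize φ (Sum.elim f fun _ => x)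

/-- If `U` is a nonprincipal ultrafilter on `ω` and `M` is an infinite structure in a
countable language, then the ultrapower `M^ω/U` is `ℵ₁`-saturated. -/
theorem stmt8 (L : FirstOrder.Language.{0,0}) (hL : L.card ≤ aleph0) (M : Type)
    [L.Structure M] [Infinite M] (U : Ultrafilter ℕ) (hU : (U : Filter ℕ) ≤ Filter.cofinite) :
    Aleph1Saturated L ((U : Filter ℕ).Product fun _ => M) := by
  classical
  intro f Φ hfin
  rcases Φ.eq_empty_or_nonempty with rfl | hne
  · exact ⟨Classical.arbitrary _, fun φ h => absurd h (Set.notMem_empty φ)⟩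
  -- Φ is countable
  have hsig : #(Σ n, L.BoundedFormula (ℕ ⊕ Unit) n) ≤ ℵ₀ := by
    refine (BoundedFormula.card_le).trans ?_
    simp only [Cardinal.lift_id]
    exact max_le le_rfl (Cardinal.add_le_aleph0.2
      ⟨Cardinal.mk_le_aleph0, hL⟩)
  haveI : Countable (Σ n, L.BoundedFormula (ℕ ⊕ Unit) n) :=
    Cardinal.mk_le_aleph0_iff.1 hsig
  haveI : Countable (L.Formula (ℕ ⊕ Unit)) :=
    Function.Injective.countable
      (f := (Sigma.mk 0 : L.BoundedFormula (ℕ ⊕ Unit) 0 → Σ n, L.BoundedFormula (ℕ ⊕ Unit) n))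
      sigma_mk_injective
  obtain ⟨φ, rfl⟩ := (Set.to_countable Φ).exists_eq_range hne
  -- representatives of the parameters
  choose g hg using fun n => Quotient.exists_rep (f n)
  -- key predicate: at coordinate i, a single witness satisfies the first n+1 formulas
  set P : ℕ → ℕ → Prop := fun n i => ∃ m : M,
    ∀ k ≤ n, (φ k).Realize (Sum.elim (fun j => g j i) fun _ => m) with hP
  have key : ∀ (x : ℕ → M) (n : ℕ),
      Formula.Realize (φ n) (Sum.elim f fun _ => (⟦x⟧ : (U : Filter ℕ).Product fun _ => M)) ↔
        ∀ᶠ i in (U : Filter ℕ), (φ n).Realize (Sum.elim (fun j => g j i) fun _ => x i) := by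
    intro x n
    have hx : (Sum.elim f fun _ : Unit => (⟦x⟧ : (U : Filter ℕ).Product fun _ => M)) =
        fun j : ℕ ⊕ Unit =>
          (↑(Sum.elim g (fun _ : Unit => x) j) : (U : Filter ℕ).Product fun _ => M) := by
      funext j
      cases j with
      | inl j => exact (hg j).symm
      | inr j => rfl
    rw [hx]
    refine (Ultraproduct.realize_formula_cast (φ n) (fun j => Sum.elim g (fun _ : Unit => x) j)).trans ?_
    refine eventually_congr (Eventually.of_forall fun i => ?_)
    have : (fun j : ℕ ⊕ Unit => Sum.elim g (fun _ : Unit => x) j i) =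
        (Sum.elim (fun j => g j i) fun _ : Unit => x i) := by
      funext j; cases j <;> rfl
    rw [this]
  -- each Bₙ = {i | P n i} belongs to U
  have Bmem : ∀ n : ℕ, {i | P n i} ∈ (U : Filter ℕ) := by
    intro n
    obtain ⟨x, hx⟩ := hfin ((Finset.range (n + 1)).image φ)
      (by intro ψ hψ
          simp only [Finset.coe_image, Set.mem_image, Finset.mem_coe] at hψ
          obtain ⟨k, _, rfl⟩ := hψ
          exact Set.mem_range_self k)
    obtain ⟨w, rfl⟩ := Quotient.exists_rep x
    have hall : ∀ k ≤ n, ∀ᶠ i in (U : Filter ℕ),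
        (φ k).Realize (Sum.elim (fun j => g j i) fun _ => w i) := by
      intro k hk
      exact (key w k).1 (hx (φ k) (Finset.mem_image_of_mem φ (Finset.mem_range.2
        (Nat.lt_succ_of_le hk))))
    have hall' : ∀ᶠ i in (U : Filter ℕ), ∀ k ≤ n,
        (φ k).Realize (Sum.elim (fun j => g j i) fun _ => w i) := by
      exact (Filter.eventually_all_finite (Set.finite_Iic n)).2 fun k hk => hall k hk
    exact Filter.mem_of_superset hall' fun i hi => ⟨w i, hi⟩
  -- diagonal witness
  letI hPdec : ∀ i, DecidablePred fun n => P n i := fun i => Classical.decPred _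
  set c : ℕ → ℕ := fun i => Nat.findGreatest (fun n => P n i) i with hc
  have h : ∀ i, ∃ m : M, P (c i) i → ∀ k ≤ c i,
      (φ k).Realize (Sum.elim (fun j => g j i) fun _ => m) := by
    intro i
    by_cases hi : P (c i) i
    · obtain ⟨m, hm⟩ := hi
      exact ⟨m, fun _ => hm⟩
    · exact ⟨Classical.arbitrary M, fun hi' => absurd hi' hi⟩
  choose w hw using h
  refine ⟨(⟦w⟧ : (U : Filter ℕ).Product fun _ => M), ?_⟩
  rintro ψ ⟨k, rfl⟩
  rw [key w k]
  have hk1 : {i : ℕ | k ≤ i} ∈ (U : Filter ℕ) := by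
    refine hU ?_
    rw [Filter.mem_cofinite]
    have : {i : ℕ | k ≤ i}ᶜ = {i | i < k} := by ext i; simp [not_le]
    rw [this]
    exact Set.finite_lt_nat k
  filter_upwards [Bmem k, hk1] with i hPi hki
  have hspec : P (c i) i := Nat.findGreatest_spec (P := fun n => P n i) hki hPi
  have hle : k ≤ c i := Nat.le_findGreatest (P := fun n => P n i) hki hPi
  exact hw i hspec k hle
end

section
/- If U is a nonprincipal ultrafilter on ω and M is an infinite structure of cardinality at most 2^{ℵ₀}, then the ultrapower M^ω/U has cardinality exactly 2^{ℵ₀}. -/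
open Cardinal Filter

/-- If `U` is a nonprincipal ultrafilter on `ω` and `M` is an infinite set of cardinality at
most `2^ℵ₀`, then the ultrapower `M^ω/U` has cardinality exactly `2^ℵ₀`. -/
theorem stmt9 (M : Type) [Infinite M] (hM : #M ≤ 2 ^ aleph0)
    (U : Ultrafilter ℕ) (hU : (U : Filter ℕ) ≤ Filter.cofinite) :
    #(Germ (U : Filter ℕ) M) = 2 ^ aleph0 := by
  apply le_antisymm
  · calc #(Germ (U : Filter ℕ) M) ≤ #(ℕ → M) := Cardinal.mk_quotient_le
      _ = #M ^ aleph0 := by simp [Cardinal.power_def, Cardinal.mk_arrow]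
      _ ≤ (2 ^ aleph0) ^ aleph0 := by exact power_le_power_right hM
      _ = 2 ^ aleph0 := by rw [← power_mul, aleph0_mul_aleph0]
  · -- inject ℝ into the germ
    obtain ⟨e⟩ : Nonempty (ℤ ↪ M) :=
      ⟨(Encodable.encode' ℤ).trans (Infinite.natEmbedding M)⟩
    have key : ∀ r s : ℝ, r ≠ s →
        {n : ℕ | e ⌊(n : ℝ) * r⌋ = e ⌊(n : ℝ) * s⌋}.Finite := by
      intro r s hrs
      have hd : 0 < |r - s| := abs_pos.mpr (sub_ne_zero.mpr hrs)
      obtain ⟨N, hN⟩ := exists_nat_gt (1 / |r - s|)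
      apply (Set.finite_Iio N).subset
      intro n hn
      simp only [Set.mem_setOf_eq] at hn
      have hfl := Int.abs_sub_lt_one_of_floor_eq_floor (e.injective hn)
      rw [← mul_sub, abs_mul, Nat.abs_cast] at hfl
      by_contra hnN
      simp only [Set.mem_Iio, not_lt] at hnN ⊢
      have h1 : (1 : ℝ) / |r - s| < n := lt_of_lt_of_le hN (by exact_mod_cast hnN)
      rw [div_lt_iff₀ hd] at h1
      linarith
    have inj : Function.Injective
        (fun r : ℝ => ((fun n : ℕ => e ⌊(n : ℝ) * r⌋ : ℕ → M) : Germ (U : Filter ℕ) M)) := by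
      intro r s h
      by_contra hrs
      rw [Germ.coe_eq] at h
      have hmem : {n : ℕ | e ⌊(n : ℝ) * r⌋ = e ⌊(n : ℝ) * s⌋} ∈ (U : Filter ℕ) := h
      have hcompl : {n : ℕ | e ⌊(n : ℝ) * r⌋ = e ⌊(n : ℝ) * s⌋}ᶜ ∈ (U : Filter ℕ) :=
        hU ((key r s hrs).compl_mem_cofinite)
      have := (U : Filter ℕ).inter_sets hmem hcompl
      simp at this

    calc (2 : Cardinal) ^ aleph0 = #ℝ := mk_real.symm
      _ ≤ #(Germ (U : Filter ℕ) M) := mk_le_of_injective inj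
end

section
/- Assume CH (2^{ℵ₀} = ℵ₁). If M and N are elementarily equivalent infinite structures of cardinality at most 2^{ℵ₀} in a countable language, then for every nonprincipal ultrafilter U on ω, M^ω/U ≅ N^ω/U. -/
open Cardinal FirstOrder FirstOrder.Language FirstOrder.Language.Structure Filter

namespace KeislerAux

variable {L : FirstOrder.Language.{0,0}}

section ER

variable (L) (A : Type) (B : Type) [L.Structure A] [L.Structure B]

/-- An elementary relation between `A` and `B`. -/
def ER (p : Set (A × B)) : Prop :=
  ∀ (n : ℕ) (φ : L.Formula (Fin n)) (c : Fin n → A × B), (∀ i, c i ∈ p) →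
    (φ.Realize (fun i => (c i).1) ↔ φ.Realize (fun i => (c i).2))

/-- countable saturation property -/
def Sat : Prop := ∀ (ρ : ℕ → B) (T : ℕ → L.Formula (ℕ ⊕ Unit)),
  (∀ n : ℕ, ∃ b : B, ∀ k ≤ n, (T k).Realize (Sum.elim ρ fun _ => b)) →
  ∃ b : B, ∀ k : ℕ, (T k).Realize (Sum.elim ρ fun _ => b)

variable {L A B}

lemma er_zero (he : A ≅[L] B) (φ : L.Formula (Fin 0)) (v : Fin 0 → A) (w : Fin 0 → B) :
    φ.Realize v ↔ φ.Realize w := by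
  have h := he.realize_sentence (φ.relabel (Fin.elim0 : Fin 0 → Empty))
  simp only [Sentence.Realize, Formula.realize_relabel] at h
  have h1 : (default : Empty → A) ∘ (Fin.elim0 : Fin 0 → Empty) = v := funext fun i => i.elim0
  have h2 : (default : Empty → B) ∘ (Fin.elim0 : Fin 0 → Empty) = w := funext fun i => i.elim0
  rwa [h1, h2] at h

lemma er_swap {p : Set (A × B)} (h : ER L A B p) : ER L B A (Prod.swap ⁻¹' p) := by
  intro n φ c hc
  exact (h n φ (fun i => (c i).swap) hc).symm

lemma ER.nat {p : Set (A × B)} (h : ER L A B p) (φ : L.Formula ℕ) (c : ℕ → A × B)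
    (hc : ∀ i, c i ∈ p) :
    (φ.Realize (fun i => (c i).1) ↔ φ.Realize (fun i => (c i).2)) := by
  classical
  set s : Set ℕ := ↑φ.freeVarFinset with hs
  have hsub : ↑φ.freeVarFinset ⊆ s := subset_rfl
  set ψ : L.BoundedFormula s 0 := φ.restrictFreeVar (Set.inclusion hsub) with hψ
  have hrealize : ∀ {M : Type} [L.Structure M] (v : ℕ → M),
      φ.Realize v ↔ Formula.Realize (ψ : L.Formula s) (v ∘ (↑)) := by
    intro M _ v
    rw [hψ]
    exact (BoundedFormula.realize_restrictFreeVar' hsub).symm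
  let e : s ≃ Fin (φ.freeVarFinset.card) :=
    (Equiv.subtypeEquivRight (fun x => Finset.mem_coe)).trans φ.freeVarFinset.equivFin
  set χ : L.Formula (Fin φ.freeVarFinset.card) := Formula.relabel (e : s → _) ψ with hχ
  have hχr : ∀ {M : Type} [L.Structure M] (v : ℕ → M),
      χ.Realize (fun i => v ↑(e.symm i)) ↔ φ.Realize v := by
    intro M _ v
    rw [hχ, Formula.realize_relabel, hrealize]
    have : ((fun i => v ↑(e.symm i)) ∘ (e : s → _)) = (v ∘ (↑) : s → M) :=
      funext fun x => by simp
    rw [this]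
  have key := h _ χ (fun i => c ↑(e.symm i)) (fun i => hc _)
  rw [hχr (fun i => (c i).1), hχr (fun i => (c i).2)] at key
  exact key

end ER

section Conj

variable {β : Type} {M : Type} [L.Structure M]

/-- iterated conjunction -/
def conj (T : ℕ → L.Formula β) : ℕ → L.Formula β
  | 0 => T 0
  | n+1 => conj T n ⊓ T (n+1)

lemma realize_conj {T : ℕ → L.Formula β} {v : β → M} {n : ℕ} :
    (conj T n).Realize v ↔ ∀ k ≤ n, (T k).Realize v := by
  induction n with
  | zero => simp [conj, Nat.le_zero]
  | succ n ih =>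
    simp only [conj, Formula.realize_inf, ih]
    constructor
    · rintro ⟨h1, h2⟩ k hk
      rcases Nat.le_succ_iff.1 hk with hk' | rfl
      · exact h1 k hk'
      · exact h2
    · intro hall
      exact ⟨fun k hk => hall k (hk.trans (Nat.le_succ n)), hall _ le_rfl⟩

end Conj

lemma formula_countable (hL : L.card ≤ ℵ₀) (α : Type) [Countable α] :
    Countable (L.Formula α) := by
  rw [← Cardinal.mk_le_aleph0_iff]
  have h1 : #(L.Formula α) ≤ #(Σ n, L.BoundedFormula α n) :=
    Cardinal.mk_le_of_injective (f := fun φ => (⟨0, φ⟩ : Σ n, L.BoundedFormula α n))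
      (fun a b hab => by injection hab)
  refine h1.trans ((BoundedFormula.card_le).trans ?_)
  have hα : #α ≤ ℵ₀ := Cardinal.mk_le_aleph0
  simp only [Cardinal.lift_id]
  rw [max_le_iff]
  refine ⟨le_rfl, ?_⟩
  calc #α + L.card ≤ ℵ₀ + ℵ₀ := add_le_add hα hL
  _ = ℵ₀ := Cardinal.aleph0_add_aleph0


section Extend

variable {A : Type} {B : Type} [L.Structure A] [L.Structure B] [Nonempty B]

lemma extend (he : A ≅[L] B) (hL : L.card ≤ ℵ₀) (sat : Sat L B)
    {p : Set (A × B)} (hER : ER L A B p) (hc : p.Countable) (a : A) :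
    ∃ b : B, ER L A B (insert (a, b) p) := by
  classical
  rcases p.eq_empty_or_nonempty with rfl | hne
  · -- empty case: realize the 1-type of `a`
    have : Countable (L.Formula Unit) := formula_countable hL Unit
    obtain ⟨u, hu⟩ := exists_surjective_nat (L.Formula Unit)
    obtain ⟨b₀⟩ := ‹Nonempty B›
    set T' : ℕ → L.Formula Unit :=
      fun n => if (u n).Realize (fun _ : Unit => a) then u n else ⊤ with hT'
    set T : ℕ → L.Formula (ℕ ⊕ Unit) := fun n => (T' n).relabel Sum.inr with hT
    have hTa : ∀ n, (T' n).Realize (fun _ : Unit => a) := by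
      intro n
      by_cases hcond : (u n).Realize (fun _ : Unit => a)
      · rw [hT']; simp only [if_pos hcond]; exact hcond
      · rw [hT']; simp only [if_neg hcond]; exact Formula.realize_top.2 trivial
    have hfin : ∀ n, ∃ b : B, ∀ k ≤ n,
        (T k).Realize (Sum.elim (fun _ => b₀) fun _ => b) := by
      intro n
      -- transfer the sentence ∃ x, conj
      set σ : L.Sentence := ((conj T' n).relabel (fun _ : Unit => (Sum.inr () : Empty ⊕ Unit))).iExs Unit
      have hA : A ⊨ σ := by
        rw [Sentence.Realize, Formula.realize_iExs]; simp only [Formula.realize_relabel]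
        exact ⟨fun _ => a, realize_conj.2 fun k _ => hTa k⟩
      have hB : B ⊨ σ := (he.realize_sentence σ).1 hA
      rw [Sentence.Realize, Formula.realize_iExs] at hB; simp only [Formula.realize_relabel] at hB
      obtain ⟨i, hi⟩ := hB
      refine ⟨i (), fun k hk => ?_⟩
      rw [hT]
      simp only [Formula.realize_relabel]
      have := realize_conj.1 hi k hk
      exact this
    obtain ⟨b, hb⟩ := sat (fun _ => b₀) T hfin
    have key : ∀ θ : L.Formula Unit,
        θ.Realize (fun _ : Unit => a) → θ.Realize (fun _ : Unit => b) := by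
      intro θ hθ
      obtain ⟨k, rfl⟩ := hu θ
      have h1 := hb k
      rw [hT] at h1
      simp only [Formula.realize_relabel] at h1
      have h2 : T' k = u k := if_pos hθ
      rw [h2] at h1
      exact h1
    have key' : ∀ θ : L.Formula Unit,
        (θ.Realize (fun _ : Unit => a) ↔ θ.Realize (fun _ : Unit => b)) := by
      intro θ
      refine ⟨key θ, fun hθ => ?_⟩
      by_contra hna
      exact (Formula.realize_not.1 (key θ.not (Formula.realize_not.2 hna))) hθ
    refine ⟨b, ?_⟩
    intro n φ c hcmem
    have hc' : ∀ i, c i = (a, b) := by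
      intro i
      have := hcmem i
      simpa using this
    have h1 : (fun i => (c i).1) = (fun _ : Fin n => a) := funext fun i => by rw [hc' i]
    have h2 : (fun i => (c i).2) = (fun _ : Fin n => b) := funext fun i => by rw [hc' i]
    rw [h1, h2]
    have := key' (φ.relabel (fun _ : Fin n => ()))
    simp only [Formula.realize_relabel] at this
    convert this using 2 <;> rfl
  · -- nonempty case
    have : Countable (L.Formula (ℕ ⊕ Unit)) := formula_countable hL (ℕ ⊕ Unit)
    obtain ⟨u, hu⟩ := exists_surjective_nat (L.Formula (ℕ ⊕ Unit))
    obtain ⟨e, hrange⟩ := hc.exists_eq_range hne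
    set va : ℕ → A := fun n => (e n).1 with hva
    set ρ : ℕ → B := fun n => (e n).2 with hρ
    have hmem : ∀ n, e n ∈ p := fun n => hrange ▸ Set.mem_range_self n
    set T : ℕ → L.Formula (ℕ ⊕ Unit) :=
      fun n => if (u n).Realize (Sum.elim va fun _ => a) then u n else ⊤ with hT
    have hTa : ∀ n, (T n).Realize (Sum.elim va fun _ => a) := by
      intro n
      by_cases hcond : (u n).Realize (Sum.elim va fun _ => a)
      · rw [hT]; simp only [if_pos hcond]; exact hcond
      · rw [hT]; simp only [if_neg hcond]; exact Formula.realize_top.2 trivial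
    have hfin : ∀ n, ∃ b : B, ∀ k ≤ n, (T k).Realize (Sum.elim ρ fun _ => b) := by
      intro n
      set χ : L.Formula ℕ := (conj T n).iExs Unit with hχ
      have hArealize : χ.Realize va := by
        rw [hχ, Formula.realize_iExs]
        refine ⟨fun _ => a, ?_⟩
        exact realize_conj.2 fun k _ => hTa k
      have hBrealize : χ.Realize ρ := (hER.nat χ e hmem).1 hArealize
      rw [hχ, Formula.realize_iExs] at hBrealize
      obtain ⟨i, hi⟩ := hBrealize
      refine ⟨i (), fun k hk => ?_⟩
      have h2 := realize_conj.1 hi k hk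
      exact h2
    obtain ⟨b, hb⟩ := sat ρ T hfin
    have key : ∀ θ : L.Formula (ℕ ⊕ Unit),
        θ.Realize (Sum.elim va fun _ => a) → θ.Realize (Sum.elim ρ fun _ => b) := by
      intro θ hθ
      obtain ⟨k, rfl⟩ := hu θ
      have h1 := hb k
      have h2 : T k = u k := if_pos hθ
      rwa [h2] at h1
    have key' : ∀ θ : L.Formula (ℕ ⊕ Unit),
        (θ.Realize (Sum.elim va fun _ => a) ↔ θ.Realize (Sum.elim ρ fun _ => b)) := by
      intro θ
      refine ⟨key θ, fun hθ => ?_⟩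
      by_contra hna
      exact (Formula.realize_not.1 (key θ.not (Formula.realize_not.2 hna))) hθ
    refine ⟨b, ?_⟩
    intro n φ c hcmem
    set g : Fin n → ℕ ⊕ Unit := fun i =>
      if h : c i ∈ p then Sum.inl (show ∃ k, e k = c i by
        rw [hrange] at h; obtain ⟨k, hk⟩ := h; exact ⟨k, hk⟩).choose
      else Sum.inr () with hg
    have hg1 : ∀ i, (Sum.elim va fun _ => a) (g i) = (c i).1 := by
      intro i
      rw [hg]
      by_cases h : c i ∈ p
      · simp only [dif_pos h, Sum.elim_inl]
        rw [hva]
        simp only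
        rw [(show ∃ k, e k = c i by
          rw [hrange] at h; obtain ⟨k, hk⟩ := h; exact ⟨k, hk⟩).choose_spec]
      · simp only [dif_neg h, Sum.elim_inr]
        rcases Set.mem_insert_iff.1 (hcmem i) with heq | hmem'
        · rw [heq]
        · exact absurd hmem' h
    have hg2 : ∀ i, (Sum.elim ρ fun _ => b) (g i) = (c i).2 := by
      intro i
      rw [hg]
      by_cases h : c i ∈ p
      · simp only [dif_pos h, Sum.elim_inl]
        rw [hρ]
        simp only
        rw [(show ∃ k, e k = c i by
          rw [hrange] at h; obtain ⟨k, hk⟩ := h; exact ⟨k, hk⟩).choose_spec]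
      · simp only [dif_neg h, Sum.elim_inr]
        rcases Set.mem_insert_iff.1 (hcmem i) with heq | hmem'
        · rw [heq]
        · exact absurd hmem' h
    have e1 : (fun i => (c i).1) = (Sum.elim va fun _ => a) ∘ g := funext fun i => (hg1 i).symm
    have e2 : (fun i => (c i).2) = (Sum.elim ρ fun _ => b) ∘ g := funext fun i => (hg2 i).symm
    rw [e1, e2, ← Formula.realize_relabel, ← Formula.realize_relabel]
    exact key' (φ.relabel g)

end Extend


section Chain

variable {A : Type} {B : Type} [L.Structure A] [L.Structure B] [Nonempty A] [Nonempty B]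

lemma er_iUnion_mono {ι : Type} [LinearOrder ι] (he : A ≅[L] B) (F : ι → Set (A × B))
    (hmono : ∀ i j, i ≤ j → F i ⊆ F j) (hF : ∀ i, ER L A B (F i)) :
    ER L A B (⋃ i, F i) := by
  intro n φ c hc
  cases n with
  | zero => exact er_zero he φ _ _
  | succ m =>
    have hsel : ∀ i : Fin (m + 1), ∃ j, c i ∈ F j := by
      intro i
      obtain ⟨s, ⟨j, rfl⟩, hmem⟩ := hc i
      exact ⟨j, hmem⟩
    choose j hj using hsel
    obtain ⟨i₀, hi₀⟩ := Finite.exists_max j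
    exact hF (j i₀) _ φ c (fun i => hmono _ _ (hi₀ i) (hj i))

lemma extend_both (he : A ≅[L] B) (hL : L.card ≤ ℵ₀) (satA : Sat L A) (satB : Sat L B)
    (p : Set (A × B)) (hER : ER L A B p) (hc : p.Countable) (a : A) (b : B) :
    ∃ q : Set (A × B), p ⊆ q ∧ ER L A B q ∧ q.Countable ∧
      (∃ b', (a, b') ∈ q) ∧ (∃ a', (a', b) ∈ q) := by
  obtain ⟨b', hb'⟩ := extend he hL satB hER hc a
  have hq1c : (insert (a, b') p).Countable := hc.insert _
  -- now swap and extend on the other side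
  have hswap : ER L B A (Prod.swap ⁻¹' (insert (a, b') p)) := er_swap hb'
  have hswapc : (Prod.swap ⁻¹' (insert (a, b') p)).Countable :=
    hq1c.preimage Prod.swap_injective
  obtain ⟨a', ha'⟩ := extend he.symm hL satA hswap hswapc b
  refine ⟨insert (a', b) (insert (a, b') p), ?_, ?_, ?_, ?_, ?_⟩
  · exact (Set.subset_insert _ _).trans (Set.subset_insert _ _)
  · have : ER L A B (Prod.swap ⁻¹' (insert (b, a') (Prod.swap ⁻¹' (insert (a, b') p)))) :=
      er_swap ha'
    have heq : Prod.swap ⁻¹' (insert (b, a') (Prod.swap ⁻¹' (insert (a, b') p)))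
        = insert (a', b) (insert (a, b') p) := by
      ext ⟨x, y⟩
      simp [Prod.swap, Prod.ext_iff, and_comm]
    rwa [heq] at this
  · exact (hq1c.insert _)
  · exact ⟨b', Set.mem_insert_iff.2 (Or.inr (Set.mem_insert _ _))⟩
  · exact ⟨a', Set.mem_insert _ _⟩

variable (he : A ≅[L] B) (hL : L.card ≤ ℵ₀) (satA : Sat L A) (satB : Sat L B)

/-- one step of the construction -/
noncomputable def Next (p : Set (A × B)) (a : A) (b : B) : Set (A × B) :=
  letI := Classical.propDecidable (ER L A B p ∧ p.Countable)
  if h : ER L A B p ∧ p.Countable then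
    (extend_both he hL satA satB p h.1 h.2 a b).choose
  else p

lemma subset_Next (p : Set (A × B)) (a : A) (b : B) : p ⊆ Next he hL satA satB p a b := by
  rw [Next]
  split_ifs with h
  · exact (extend_both he hL satA satB p h.1 h.2 a b).choose_spec.1
  · exact subset_rfl

lemma Next_spec {p : Set (A × B)} (h1 : ER L A B p) (h2 : p.Countable) (a : A) (b : B) :
    ER L A B (Next he hL satA satB p a b) ∧ (Next he hL satA satB p a b).Countable ∧
      (∃ b', (a, b') ∈ Next he hL satA satB p a b) ∧
      (∃ a', (a', b) ∈ Next he hL satA satB p a b) := by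
  rw [Next, dif_pos ⟨h1, h2⟩]
  obtain ⟨_, h3, h4, h5, h6⟩ := (extend_both he hL satA satB p h1 h2 a b).choose_spec
  exact ⟨h3, h4, h5, h6⟩

variable {κ : Type} [LinearOrder κ] [WellFoundedLT κ]

/-- the transfinite chain of partial elementary relations -/
noncomputable def chain (eA : κ → A) (eB : κ → B) : κ → Set (A × B) :=
  (IsWellFounded.wf (r := ((· < ·) : κ → κ → Prop))).fix
    (fun i rec => Next he hL satA satB (⋃ j : {j : κ // j < i}, rec j j.2) (eA i) (eB i))

lemma chain_eq (eA : κ → A) (eB : κ → B) (i : κ) :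
    chain he hL satA satB eA eB i = Next he hL satA satB
      (⋃ j : {j : κ // j < i}, chain he hL satA satB eA eB j) (eA i) (eB i) := by
  rw [chain, WellFounded.fix_eq]

lemma chain_mono (eA : κ → A) (eB : κ → B) {j i : κ} (hij : j < i) :
    chain he hL satA satB eA eB j ⊆ chain he hL satA satB eA eB i := by
  rw [chain_eq he hL satA satB eA eB i]
  refine Set.Subset.trans ?_ (subset_Next _ _ _ _ _ _ _)
  exact Set.subset_iUnion (fun j' : {j' : κ // j' < i} => chain he hL satA satB eA eB j')
    ⟨j, hij⟩

lemma chain_mono' (eA : κ → A) (eB : κ → B) {j i : κ} (hij : j ≤ i) :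
    chain he hL satA satB eA eB j ⊆ chain he hL satA satB eA eB i := by
  rcases eq_or_lt_of_le hij with rfl | h
  · exact subset_rfl
  · exact chain_mono he hL satA satB eA eB h

lemma chain_good (hseg : ∀ i : κ, Set.Countable {j | j < i}) (eA : κ → A) (eB : κ → B)
    (i : κ) : ER L A B (chain he hL satA satB eA eB i) ∧
      (chain he hL satA satB eA eB i).Countable := by
  induction i using WellFoundedLT.induction with
  | ind i IH =>
    have hu_er : ER L A B (⋃ j : {j : κ // j < i}, chain he hL satA satB eA eB j) := by
      intro n φ c hc
      cases n with
      | zero => exact er_zero he φ _ _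
      | succ m =>
        have hsel : ∀ x : Fin (m + 1), ∃ j : {j : κ // j < i},
            c x ∈ chain he hL satA satB eA eB j := by
          intro x
          obtain ⟨s, ⟨j, rfl⟩, hmem⟩ := hc x
          exact ⟨j, hmem⟩
        choose j hj using hsel
        obtain ⟨x₀, hx₀⟩ := Finite.exists_max j
        refine (IH (j x₀) (j x₀).2).1 _ φ c (fun x => ?_)
        exact chain_mono' he hL satA satB eA eB (Subtype.coe_le_coe.2 (hx₀ x)) (hj x)
    have hu_c : (⋃ j : {j : κ // j < i}, chain he hL satA satB eA eB j).Countable := by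
      have : Countable {j : κ // j < i} := (hseg i).to_subtype
      exact Set.countable_iUnion (fun j => (IH j j.2).2)
    have := Next_spec he hL satA satB hu_er hu_c (eA i) (eB i)
    rw [← chain_eq he hL satA satB eA eB i] at this
    exact ⟨this.1, this.2.1⟩

lemma chain_covers (hseg : ∀ i : κ, Set.Countable {j | j < i}) (eA : κ → A) (eB : κ → B)
    (i : κ) : (∃ b', (eA i, b') ∈ chain he hL satA satB eA eB i) ∧
      (∃ a', (a', eB i) ∈ chain he hL satA satB eA eB i) := by
  have hu_er : ER L A B (⋃ j : {j : κ // j < i}, chain he hL satA satB eA eB j) := by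
    intro n φ c hc
    cases n with
    | zero => exact er_zero he φ _ _
    | succ m =>
      have hsel : ∀ x : Fin (m + 1), ∃ j : {j : κ // j < i},
          c x ∈ chain he hL satA satB eA eB j := by
        intro x
        obtain ⟨s, ⟨j, rfl⟩, hmem⟩ := hc x
        exact ⟨j, hmem⟩
      choose j hj using hsel
      obtain ⟨x₀, hx₀⟩ := Finite.exists_max j
      refine (chain_good he hL satA satB hseg eA eB (j x₀)).1 _ φ c (fun x => ?_)
      exact chain_mono' he hL satA satB eA eB (Subtype.coe_le_coe.2 (hx₀ x)) (hj x)
  have hu_c : (⋃ j : {j : κ // j < i}, chain he hL satA satB eA eB j).Countable := by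
    have : Countable {j : κ // j < i} := (hseg i).to_subtype
    exact Set.countable_iUnion (fun j => (chain_good he hL satA satB hseg eA eB j).2)
  have := Next_spec he hL satA satB hu_er hu_c (eA i) (eB i)
  rw [← chain_eq he hL satA satB eA eB i] at this
  exact ⟨this.2.2.1, this.2.2.2⟩

end Chain


section Build

variable {A : Type} {B : Type} [L.Structure A] [L.Structure B]

lemma equiv_of_ER (P : Set (A × B)) (hER : ER L A B P)
    (hdom : ∀ a : A, ∃ b, (a, b) ∈ P) (hcod : ∀ b : B, ∃ a, (a, b) ∈ P) :
    Nonempty (A ≃[L] B) := by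
  classical
  -- single-valuedness
  have sv : ∀ a b b', (a, b) ∈ P → (a, b') ∈ P → b = b' := by
    intro a b b' h1 h2
    have := hER 2 (Term.equal (Term.var 0) (Term.var 1)) ![(a, b), (a, b')]
      (by intro i; fin_cases i <;> assumption)
    simp only [Formula.realize_equal, Term.realize_var] at this
    have heq : (![(a, b), (a, b')] 0).1 = (![(a, b), (a, b')] 1).1 := rfl
    exact this.1 heq
  have inj : ∀ a a' b, (a, b) ∈ P → (a', b) ∈ P → a = a' := by
    intro a a' b h1 h2
    have := hER 2 (Term.equal (Term.var 0) (Term.var 1)) ![(a, b), (a', b)]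
      (by intro i; fin_cases i <;> assumption)
    simp only [Formula.realize_equal, Term.realize_var] at this
    have heq : (![(a, b), (a', b)] 0).2 = (![(a, b), (a', b)] 1).2 := rfl
    exact this.2 heq
  set f : A → B := fun a => (hdom a).choose with hf
  have hfP : ∀ a, (a, f a) ∈ P := fun a => (hdom a).choose_spec
  set g : B → A := fun b => (hcod b).choose with hg
  have hgP : ∀ b, (g b, b) ∈ P := fun b => (hcod b).choose_spec
  have hleft : Function.LeftInverse g f := by
    intro a
    exact (inj _ _ _ (hgP (f a)) (hfP a))
  have hright : Function.RightInverse g f := by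
    intro b
    exact (sv _ _ _ (hfP (g b)) (hgP b))
  refine ⟨⟨⟨f, g, hleft, hright⟩, ?_, ?_⟩⟩
  · -- map_fun
    intro n fn x
    set y : Fin (n + 1) → A := Fin.snoc x (funMap fn x) with hy
    have := hER (n + 1)
      (Term.equal (Term.func fn (fun i => Term.var i.castSucc)) (Term.var (Fin.last n)))
      (fun i => (y i, f (y i))) (fun i => hfP (y i))
    simp only [Formula.realize_equal, Term.realize_func, Term.realize_var] at this
    have h1 : funMap fn (fun i => y i.castSucc) = y (Fin.last n) := by
      rw [hy]
      simp [Fin.snoc_castSucc, Fin.snoc_last]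
    have h2 := this.1 h1
    have h3 : ∀ i : Fin n, y i.castSucc = x i := fun i => by rw [hy]; simp
    have h4 : y (Fin.last n) = funMap fn x := by rw [hy]; simp
    simp only [Equiv.coe_fn_mk]
    rw [← h4]
    rw [← h2]
    congr 1
    funext i
    rw [h3 i]
    rfl
  · -- map_rel
    intro n r x
    have := hER n (Relations.formula r (fun i => Term.var i))
      (fun i => (x i, f (x i))) (fun i => hfP (x i))
    simp only [Formula.realize_rel, Term.realize_var] at this
    exact (this.symm)

end Build


section Ultra

variable {M : Type} [L.Structure M] [Nonempty M]

lemma sat_ultra (U : Ultrafilter ℕ) (hU : (U : Filter ℕ) ≤ Filter.cofinite) :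
    Sat L ((U : Filter ℕ).Product fun _ => M) := by
  classical
  intro ρ T hfin
  -- representatives of the parameters
  have hrep : ∀ n, ∃ r : ℕ → M, (↑r : (U : Filter ℕ).Product fun _ => M) = ρ n := by
    intro n
    obtain ⟨r, hr⟩ := Quotient.exists_rep (ρ n)
    exact ⟨r, hr⟩
  choose r hr using hrep
  -- witnesses for finite fragments
  choose w hw using hfin
  have hwrep : ∀ n, ∃ v : ℕ → M, (↑v : (U : Filter ℕ).Product fun _ => M) = w n := by
    intro n
    obtain ⟨v, hv⟩ := Quotient.exists_rep (w n)
    exact ⟨v, hv⟩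
  choose v hv using hwrep
  -- Łoś translation
  have los : ∀ (k : ℕ) (z : ℕ → M),
      ((T k).Realize (Sum.elim ρ fun _ => (↑z : (U : Filter ℕ).Product fun _ => M))) ↔
        ∀ᶠ m in (U : Filter ℕ), (T k).Realize (fun i => Sum.elim r (fun _ => z) i m) := by
    intro k z
    have := Ultraproduct.realize_formula_cast (u := U) (T k)
      (Sum.elim r (fun _ : Unit => z))
    have harg : (fun i => (↑(Sum.elim r (fun _ : Unit => z) i) :
        (U : Filter ℕ).Product fun _ => M)) = Sum.elim ρ fun _ => (↑z) := by
      funext i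
      cases i with
      | inl j => exact hr j
      | inr u => rfl
    rw [harg] at this
    exact this
  -- the sets A n
  set As : ℕ → Set ℕ := fun n =>
    {m | n ≤ m ∧ ∀ k ≤ n, (T k).Realize (fun i => Sum.elim r (fun _ => v n) i m)} with hAs
  have hAU : ∀ n, As n ∈ (U : Filter ℕ) := by
    intro n
    have h1 : {m | n ≤ m} ∈ (U : Filter ℕ) := by
      apply hU
      rw [Nat.cofinite_eq_atTop]
      exact Filter.mem_atTop n
    have h2 : {m | ∀ k ≤ n, (T k).Realize (fun i => Sum.elim r (fun _ => v n) i m)}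
        ∈ (U : Filter ℕ) := by
      have : ∀ k ≤ n, ∀ᶠ m in (U : Filter ℕ),
          (T k).Realize (fun i => Sum.elim r (fun _ => v n) i m) := by
        intro k hk
        rw [← los k (v n)]
        have := hw n k hk
        rwa [hv n] 
      have hfinite : (Set.Iic n).Finite := Set.finite_Iic n
      have := (Filter.eventually_all_finite hfinite
        (p := fun k m => (T k).Realize (fun i => Sum.elim r (fun _ => v n) i m))
        (l := (U : Filter ℕ))).2 (fun k hk => this k hk)
      exact this
    have := Filter.inter_mem h1 h2
    exact Filter.mem_of_superset this (fun m hm => ⟨hm.1, hm.2⟩)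
  -- the diagonal witness
  set Good : ℕ → ℕ → Prop := fun n m => ∀ j ≤ n, m ∈ As j with hGood
  set D : ℕ → ℕ := fun m => Nat.findGreatest (fun n => Good n m) m with hD
  set g : ℕ → M := fun m => v (D m) m with hgdef
  refine ⟨(↑g : (U : Filter ℕ).Product fun _ => M), fun k => ?_⟩
  rw [los k g]
  have hsub : (⋂ j ∈ Set.Iic (k + 1), As j) ⊆
      {m | (T k).Realize (fun i => Sum.elim r (fun _ => g) i m)} := by
    intro m hm
    simp only [Set.mem_iInter] at hm
    have hGoodk : Good (k + 1) m := fun j hj => hm j (Set.mem_Iic.2 hj)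
    have hkm : k + 1 ≤ m := (hm (k + 1) (Set.mem_Iic.2 le_rfl)).1
    have hDk : k + 1 ≤ D m := Nat.le_findGreatest hkm hGoodk
    have hGoodD : Good (D m) m :=
      Nat.findGreatest_spec (P := fun n => Good n m) hkm hGoodk
    have hmem : m ∈ As (D m) := hGoodD (D m) le_rfl
    have hreal := hmem.2 k (le_of_lt (Nat.lt_of_lt_of_le (Nat.lt_succ_self k) hDk))
    have : (fun i : ℕ ⊕ Unit => Sum.elim r (fun _ => g) i m)
        = (fun i : ℕ ⊕ Unit => Sum.elim r (fun _ => v (D m)) i m) := by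
      funext i
      cases i with
      | inl j => rfl
      | inr u => rfl
    show (T k).Realize fun i => Sum.elim r (fun _ => g) i m
    rw [this]
    exact hreal
  have hinter : (⋂ j ∈ Set.Iic (k + 1), As j) ∈ (U : Filter ℕ) :=
    (Filter.biInter_mem (Set.finite_Iic (k + 1))).2 (fun j _ => hAU j)
  exact Filter.mem_of_superset hinter hsub

end Ultra

universe u in
lemma ch_down (ch : (2 : Cardinal.{u}) ^ aleph0.{u} = aleph.{u} 1) :
    (2 : Cardinal.{0}) ^ aleph0.{0} = aleph.{0} 1 := by
  apply Cardinal.lift_injective.{u, 0}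
  rw [Cardinal.lift_power, Cardinal.lift_two, Cardinal.lift_aleph0, Cardinal.lift_aleph,
    Ordinal.lift_one]
  exact ch

end KeislerAux

/-- Keisler's theorem: assuming CH, if `M` and `N` are elementarily equivalent infinite
structures of cardinality at most `2^ℵ₀` in a countable language, then for every nonprincipal
ultrafilter `U` on `ω`, the ultrapowers `M^ω/U` and `N^ω/U` are isomorphic. -/
theorem stmt10 (ch : 2 ^ aleph0 = aleph 1)
    (L : FirstOrder.Language.{0,0}) (hL : L.card ≤ aleph0)
    (M N : Type) [L.Structure M] [L.Structure N] [Infinite M] [Infinite N]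
    (hM : #M ≤ 2 ^ aleph0) (hN : #N ≤ 2 ^ aleph0) (he : M ≅[L] N)
    (U : Ultrafilter ℕ) (hU : (U : Filter ℕ) ≤ Filter.cofinite) :
    Nonempty (((U : Filter ℕ).Product fun _ => M) ≃[L] ((U : Filter ℕ).Product fun _ => N)) := by
  classical
  have heU : ((U : Filter ℕ).Product fun _ => M) ≅[L] ((U : Filter ℕ).Product fun _ => N) := by
    rw [elementarilyEquivalent_iff]
    intro φ
    rw [Ultraproduct.sentence_realize, Ultraproduct.sentence_realize,
      Filter.eventually_const, Filter.eventually_const]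
    exact he.realize_sentence φ
  have satA : KeislerAux.Sat L ((U : Filter ℕ).Product fun _ => M) := KeislerAux.sat_ultra U hU
  have satB : KeislerAux.Sat L ((U : Filter ℕ).Product fun _ => N) := KeislerAux.sat_ultra U hU
  -- the index well-order of type ω₁
  set κ : Type := ((aleph 1).ord).ToType with hκ
  have hseg : ∀ i : κ, Set.Countable {j | j < i} := by
    intro i
    rw [Cardinal.countable_iff_lt_aleph_one]
    exact Cardinal.mk_Iio_ord_toType i
  have hκcard : #κ = aleph 1 := by
    rw [hκ, Cardinal.mk_toType, Cardinal.card_ord]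
  -- cardinality bounds
  have cardbound : ∀ (X : Type) [L.Structure X], #X ≤ (2 : Cardinal) ^ aleph0 →
      #((U : Filter ℕ).Product fun _ => X) ≤ aleph 1 := by
    intro X _ hX
    have h1 : #((U : Filter ℕ).Product fun _ => X) ≤ #(ℕ → X) := Cardinal.mk_quotient_le
    have h2 : #(ℕ → X) = #X ^ (ℵ₀ : Cardinal.{0}) := by
      rw [← Cardinal.power_def, Cardinal.mk_nat]
    have h3 : #X ^ (ℵ₀ : Cardinal.{0}) ≤ ((2 : Cardinal.{0}) ^ (ℵ₀ : Cardinal.{0})) ^ (ℵ₀ : Cardinal) :=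
      Cardinal.power_le_power_right hX
    have h4 : ((2 : Cardinal.{0}) ^ (ℵ₀ : Cardinal.{0})) ^ (ℵ₀ : Cardinal) = (2 : Cardinal.{0}) ^ (ℵ₀ : Cardinal.{0}) := by
      rw [← Cardinal.power_mul, Cardinal.aleph0_mul_aleph0]
    calc #((U : Filter ℕ).Product fun _ => X) ≤ #(ℕ → X) := h1
      _ = #X ^ (ℵ₀ : Cardinal.{0}) := h2
      _ ≤ ((2 : Cardinal.{0}) ^ (ℵ₀ : Cardinal.{0})) ^ (ℵ₀ : Cardinal) := h3
      _ = (2 : Cardinal.{0}) ^ (ℵ₀ : Cardinal.{0}) := h4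
      _ = aleph 1 := KeislerAux.ch_down ch
  have hAcard : #((U : Filter ℕ).Product fun _ => M) ≤ #κ := by rw [hκcard]; exact cardbound M hM
  have hBcard : #((U : Filter ℕ).Product fun _ => N) ≤ #κ := by rw [hκcard]; exact cardbound N hN
  -- surjective enumerations
  obtain ⟨embA⟩ := (Cardinal.le_def _ _).1 hAcard
  obtain ⟨embB⟩ := (Cardinal.le_def _ _).1 hBcard
  set eA : κ → ((U : Filter ℕ).Product fun _ => M) := Function.invFun embA with heA
  set eB : κ → ((U : Filter ℕ).Product fun _ => N) := Function.invFun embB with heB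
  have heAsurj : Function.Surjective eA := Function.invFun_surjective embA.injective
  have heBsurj : Function.Surjective eB := Function.invFun_surjective embB.injective
  -- the limit relation
  set P : Set (((U : Filter ℕ).Product fun _ => M) × ((U : Filter ℕ).Product fun _ => N)) := ⋃ i : κ, KeislerAux.chain heU hL satA satB eA eB i with hP
  have hERP : KeislerAux.ER L _ _ P := by
    apply KeislerAux.er_iUnion_mono heU
    · intro i j hij
      exact KeislerAux.chain_mono' heU hL satA satB eA eB hij
    · intro i
      exact (KeislerAux.chain_good heU hL satA satB hseg eA eB i).1
  have hdom : ∀ a : ((U : Filter ℕ).Product fun _ => M), ∃ b, (a, b) ∈ P := by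
    intro a
    obtain ⟨i, rfl⟩ := heAsurj a
    obtain ⟨b', hb'⟩ := (KeislerAux.chain_covers heU hL satA satB hseg eA eB i).1
    exact ⟨b', Set.mem_iUnion.2 ⟨i, hb'⟩⟩
  have hcod : ∀ b : ((U : Filter ℕ).Product fun _ => N), ∃ a, (a, b) ∈ P := by
    intro b
    obtain ⟨i, rfl⟩ := heBsurj b
    obtain ⟨a', ha'⟩ := (KeislerAux.chain_covers heU hL satA satB hseg eA eB i).2
    exact ⟨a', Set.mem_iUnion.2 ⟨i, ha'⟩⟩
  exact KeislerAux.equiv_of_ER P hERP hdom hcod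
end

section
/- If Cov(meagre) = 2^{ℵ₀}, then MA_κ(countable) holds for every cardinal κ < 2^{ℵ₀}: for every countable partial order P and every family A of κ many dense subsets of P, there is a filter G ⊆ P meeting every member of A. -/
open Cardinal

/-- The covering number of the meagre ideal: the least cardinality of a family of meagre
subsets of `ℝ` covering `ℝ`. -/
noncomputable def covMeagre : Cardinal :=
  sInf {c | ∃ S : Set (Set ℝ), (∀ s ∈ S, IsMeagre s) ∧ ⋃₀ S = Set.univ ∧ #S = c}

namespace Stmt12Aux

/-- Binary digit `j` of a real number. -/
noncomputable def dig (r : ℝ) (j : ℕ) : Bool := decide (⌊r * 2 ^ (j + 1)⌋ % 2 = 1)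

/-- Dyadic cylinder (half-open dyadic interval). -/
noncomputable def cyl (n : ℕ) (a : ℤ) : Set ℝ :=
  Set.Ico ((a : ℝ) / 2 ^ n) (((a : ℝ) + 1) / 2 ^ n)

open Classical in
/-- The decreasing sequence in `P` coded by a sequence of bits. -/
noncomputable def seqX {P : Type} [PartialOrder P] (e : ℕ → P) (b : ℕ → Bool) : ℕ → P
  | 0 => e 0
  | (n + 1) =>
      if b n = true ∧ e (Nat.unpair n).2 ≤ seqX e b n then e (Nat.unpair n).2
      else seqX e b n

variable {P : Type} [PartialOrder P] (e : ℕ → P) (b b' : ℕ → Bool)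

lemma seqX_succ_le (n : ℕ) : seqX e b (n + 1) ≤ seqX e b n := by
  rw [seqX]
  split
  · exact (by assumption : _ ∧ _).2
  · exact le_rfl

lemma seqX_le {m n : ℕ} (h : m ≤ n) : seqX e b n ≤ seqX e b m := by
  induction n with
  | zero => simp_all
  | succ k ih =>
      rcases Nat.lt_or_ge m (k + 1) with h' | h'
      · exact (seqX_succ_le e b k).trans (ih (by omega))
      · have : m = k + 1 := by omega
        subst this; exact le_rfl

lemma seqX_congr {n : ℕ} (h : ∀ j < n, b j = b' j) : seqX e b n = seqX e b' n := by
  induction n with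
  | zero => rfl
  | succ k ih =>
      have hk := ih (fun j hj => h j (by omega))
      rw [seqX, seqX, hk, h k (by omega)]

lemma seqX_stable {n n' : ℕ} (h : n ≤ n') (hb : ∀ j, n ≤ j → j < n' → b j = false) :
    seqX e b n' = seqX e b n := by
  induction n' with
  | zero => simp_all
  | succ k ih =>
      rcases Nat.lt_or_ge n (k + 1) with h' | h'
      · have hk := ih (by omega) (fun j h1 h2 => hb j h1 (by omega))
        rw [seqX, hk]
        have : b k = false := hb k (by omega) (by omega)
        simp [this]
      · have : n = k + 1 := by omega
        subst this; rfl

lemma floor_eq_of_mem (a : ℤ) {m j : ℕ} (hj : j ≤ m) {r : ℝ}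
    (h1 : (a : ℝ) / 2 ^ m ≤ r) (h2 : r < ((a : ℝ) + 1) / 2 ^ m) :
    ⌊r * 2 ^ j⌋ = a / 2 ^ (m - j) := by
  set k := m - j with hk
  have hmk : m = k + j := by omega
  set q : ℤ := a / 2 ^ k with hq
  have hdm : (2 : ℤ) ^ k * q + a % 2 ^ k = a := Int.mul_ediv_add_emod a (2 ^ k)
  have h0 : (0 : ℤ) ≤ a % 2 ^ k := Int.emod_nonneg a (by positivity)
  have h1' : a % 2 ^ k < 2 ^ k := Int.emod_lt_of_pos a (by positivity)
  have hpow : (2 : ℝ) ^ m = 2 ^ k * 2 ^ j := by rw [hmk, pow_add]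
  have hA : (a : ℝ) ≤ r * 2 ^ m := by
    rw [div_le_iff₀ (by positivity)] at h1; linarith
  have hB : r * 2 ^ m < (a : ℝ) + 1 := by
    rw [lt_div_iff₀ (by positivity)] at h2; linarith
  have hreal : ((2 : ℝ)) ^ k * (q : ℝ) + ((a % 2 ^ k : ℤ) : ℝ) = (a : ℝ) := by
    exact_mod_cast congrArg (fun z : ℤ => (z : ℝ)) hdm
  rw [Int.floor_eq_iff]
  have h2k : (0 : ℝ) < 2 ^ k := by positivity
  constructor
  · have hs : ((a % 2 ^ k : ℤ) : ℝ) ≥ 0 := by exact_mod_cast h0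
    have : (2 : ℝ) ^ k * (q : ℝ) ≤ (a : ℝ) := by linarith
    have h3 : (2 : ℝ) ^ k * (q : ℝ) ≤ r * 2 ^ m := le_trans this hA
    rw [hpow] at h3
    nlinarith
  · have hlt : ((a % 2 ^ k : ℤ) : ℝ) + 1 ≤ (2 : ℝ) ^ k := by
      have : (a % 2 ^ k) + 1 ≤ (2 : ℤ) ^ k := h1'
      exact_mod_cast this
    have h3 : (a : ℝ) + 1 ≤ (2 : ℝ) ^ k * ((q : ℝ) + 1) := by nlinarith [hreal]
    have h4 : r * 2 ^ m < (2 : ℝ) ^ k * ((q : ℝ) + 1) := lt_of_lt_of_le hB h3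
    rw [hpow] at h4
    nlinarith

lemma dig_eq_of_mem {n : ℕ} {a : ℤ} {r : ℝ} (hr : r ∈ cyl n a) {j : ℕ} (hj : j < n) :
    dig r j = decide ((a / 2 ^ (n - (j + 1))) % 2 = 1) := by
  obtain ⟨hr1, hr2⟩ := hr
  rw [dig, floor_eq_of_mem a (by omega : j + 1 ≤ n) hr1 hr2]

lemma cyl_subset (n d : ℕ) (a : ℤ) :
    cyl (n + d + 1) (a * 2 ^ (d + 1) + 1) ⊆ cyl n a := by
  intro r hr
  obtain ⟨h1, h2⟩ := hr
  have hp : (0 : ℝ) < 2 ^ (n + d + 1) := by positivity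
  have hpn : (0 : ℝ) < 2 ^ n := by positivity
  have he : (2 : ℝ) ^ (n + d + 1) = 2 ^ n * 2 ^ (d + 1) := by ring
  have h21 : (2 : ℝ) ≤ 2 ^ (d + 1) := by
    calc (2 : ℝ) = 2 ^ 1 := (pow_one 2).symm
    _ ≤ 2 ^ (d + 1) := by apply pow_le_pow_right₀ (by norm_num); omega
  have hpd : (0 : ℝ) < 2 ^ (d + 1) := by positivity
  constructor
  · refine le_trans ?_ h1
    rw [div_le_div_iff₀ hpn hp, he]
    push_cast
    nlinarith [hpn]
  · refine lt_of_lt_of_le h2 ?_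
    rw [div_le_div_iff₀ hp hpn, he]
    push_cast
    nlinarith [mul_le_mul_of_nonneg_left h21 hpn.le]

lemma cyl_lt (n : ℕ) (a : ℤ) : (a : ℝ) / 2 ^ n < ((a : ℝ) + 1) / 2 ^ n := by
  have h : (0 : ℝ) < 2 ^ n := by positivity
  rw [div_lt_div_iff₀ h h]; nlinarith

lemma exists_cyl_subset {U : Set ℝ} (hU : IsOpen U) {u : ℝ} (hu : u ∈ U) :
    ∃ n a, cyl n a ⊆ U := by
  obtain ⟨ε, hε, hball⟩ := Metric.isOpen_iff.mp hU u hu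
  obtain ⟨n, hn⟩ : ∃ n : ℕ, (1 : ℝ) / 2 ^ n < ε := by
    obtain ⟨n, hn⟩ := pow_unbounded_of_one_lt (1 / ε) (by norm_num : (1 : ℝ) < 2)
    refine ⟨n, ?_⟩
    rw [div_lt_iff₀ (by positivity)]
    rw [div_lt_iff₀ hε] at hn
    nlinarith
  refine ⟨n, ⌊u * 2 ^ n⌋, fun x hx => hball ?_⟩
  obtain ⟨h1, h2⟩ := hx
  have hfl : (⌊u * 2 ^ n⌋ : ℝ) ≤ u * 2 ^ n := Int.floor_le _
  have hfu : u * 2 ^ n < ⌊u * 2 ^ n⌋ + 1 := Int.lt_floor_add_one _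
  have hpn : (0 : ℝ) < 2 ^ n := by positivity
  rw [Metric.mem_ball, Real.dist_eq]
  rw [div_le_iff₀ hpn] at h1
  rw [lt_div_iff₀ hpn] at h2
  rw [div_lt_iff₀ hpn] at hn
  rw [abs_sub_lt_iff]
  constructor <;> nlinarith

lemma one_lt_two_pow_int {t : ℕ} (ht : 1 ≤ t) : (1 : ℤ) < 2 ^ t := by
  calc (1 : ℤ) < 2 ^ 1 := by norm_num
  _ ≤ 2 ^ t := pow_le_pow_right₀ (by norm_num) ht

lemma ediv_pow_even (a : ℤ) (d t : ℕ) (h1 : 1 ≤ t) (h2 : t ≤ d) :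
    ((a * 2 ^ (d + 1) + 1) / 2 ^ t) % 2 = 0 := by
  have h2t : (2 : ℤ) ^ t ≠ 0 := by positivity
  have hsplit : a * 2 ^ (d + 1) + 1 = 1 + (a * 2 ^ (d + 1 - t)) * 2 ^ t := by
    rw [mul_assoc, ← pow_add, show d + 1 - t + t = d + 1 by omega]
    ring
  rw [hsplit, Int.add_mul_ediv_right _ _ h2t,
    Int.ediv_eq_zero_of_lt (by norm_num) (one_lt_two_pow_int h1), zero_add]
  have hdvd : (2 : ℤ) ∣ a * 2 ^ (d + 1 - t) :=
    Dvd.dvd.mul_left (dvd_pow_self 2 (by omega : d + 1 - t ≠ 0)) a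
  exact Int.emod_eq_zero_of_dvd hdvd

lemma add_one_odd (a : ℤ) (d : ℕ) : (a * 2 ^ (d + 1) + 1) % 2 = 1 := by
  obtain ⟨c, hc⟩ : (2 : ℤ) ∣ a * 2 ^ (d + 1) :=
    Dvd.dvd.mul_left (dvd_pow_self 2 (by omega : d + 1 ≠ 0)) a
  rw [hc]
  omega

/-- Key density lemma: inside any cylinder there is a subcylinder on which the coded
sequence meets `Di`. -/
lemma exists_subcyl (he : Function.Surjective e) (Di : Set P)
    (hDi : ∀ p, ∃ q ∈ Di, q ≤ p) (n : ℕ) (a : ℤ) :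
    ∃ n' a', cyl n' a' ⊆ cyl n a ∧ ∀ r ∈ cyl n' a', ∃ m, seqX e (dig r) m ∈ Di := by
  set c : ℝ := (a : ℝ) / 2 ^ n with hc
  have hcmem : c ∈ cyl n a := ⟨le_rfl, cyl_lt n a⟩
  set p : P := seqX e (dig c) n with hp
  obtain ⟨q, hqD, hqp⟩ := hDi p
  obtain ⟨k, hk⟩ := he q
  set N : ℕ := Nat.pair n k with hN
  have hnN : n ≤ N := Nat.left_le_pair n k
  have hunp : (Nat.unpair N).2 = k := by rw [hN, Nat.unpair_pair]
  set d : ℕ := N - n with hd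
  have hNd : N = n + d := by omega
  set a' : ℤ := a * 2 ^ (d + 1) + 1 with ha'
  refine ⟨n + d + 1, a', cyl_subset n d a, fun r hr => ?_⟩
  have hrA : r ∈ cyl n a := cyl_subset n d a hr
  -- the sequence agrees with p at stage n
  have hstep1 : seqX e (dig r) n = p := by
    rw [hp]
    exact seqX_congr e _ _ (fun j hj => by
      rw [dig_eq_of_mem hrA hj, dig_eq_of_mem hcmem hj])
  -- digits between n and N are false
  have hstep2 : ∀ j, n ≤ j → j < N → dig r j = false := by
    intro j hj1 hj2
    have hjlt : j < n + d + 1 := by omega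
    rw [dig_eq_of_mem hr hjlt]
    have hex : n + d + 1 - (j + 1) = n + d - j := by omega
    rw [hex]
    rw [ha', ediv_pow_even a d (n + d - j) (by omega) (by omega)]
    simp
  -- digit at N is true
  have hstep3 : dig r N = true := by
    have hNlt : N < n + d + 1 := by omega
    rw [dig_eq_of_mem hr hNlt]
    have hex : n + d + 1 - (N + 1) = 0 := by omega
    rw [hex]
    simp only [pow_zero, Int.ediv_one]
    rw [ha', add_one_odd a d]
    simp
  -- sequence stays at p until N
  have hstay : seqX e (dig r) N = p := by
    rw [seqX_stable e _ hnN hstep2, hstep1]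
  refine ⟨N + 1, ?_⟩
  rw [seqX]
  have hcond : dig r N = true ∧ e (Nat.unpair N).2 ≤ seqX e (dig r) N := by
    refine ⟨hstep3, ?_⟩
    rw [hunp, hk, hstay]
    exact hqp
  rw [if_pos hcond, hunp, hk]
  exact hqD

/-- The bad set for a dense set `Di` is nowhere dense. -/
lemma isNowhereDense_bad (he : Function.Surjective e) (Di : Set P)
    (hDi : ∀ p, ∃ q ∈ Di, q ≤ p) :
    IsNowhereDense {r : ℝ | ∀ m, seqX e (dig r) m ∉ Di} := by
  set Nset := {r : ℝ | ∀ m, seqX e (dig r) m ∉ Di} with hNset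
  rw [IsNowhereDense, Set.eq_empty_iff_forall_notMem]
  intro u hu
  rw [mem_interior_iff_mem_nhds, Metric.mem_nhds_iff] at hu
  obtain ⟨ε, hε, hball⟩ := hu
  obtain ⟨n, a, hsub⟩ := exists_cyl_subset Metric.isOpen_ball (Metric.mem_ball_self hε)
  obtain ⟨n', a', hsub', hmeet⟩ := exists_subcyl e he Di hDi n a
  have hlt := cyl_lt n' a'
  set y : ℝ := ((a' : ℝ) / 2 ^ n' + ((a' : ℝ) + 1) / 2 ^ n') / 2 with hy
  have hyIoo : y ∈ Set.Ioo ((a' : ℝ) / 2 ^ n') (((a' : ℝ) + 1) / 2 ^ n') :=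
    ⟨by rw [hy]; linarith, by rw [hy]; linarith⟩
  have hycyl : y ∈ cyl n' a' := Set.Ioo_subset_Ico_self hyIoo
  have hyclos : y ∈ closure Nset := hball (hsub (hsub' hycyl))
  rw [mem_closure_iff] at hyclos
  obtain ⟨z, hz1, hz2⟩ := hyclos _ isOpen_Ioo hyIoo
  obtain ⟨m, hm⟩ := hmeet z (Set.Ioo_subset_Ico_self hz1)
  exact hz2 m hm

end Stmt12Aux

open Stmt12Aux in
/-- If `Cov(meagre) = 2^ℵ₀`, then `MA_κ(countable)` holds for every `κ < 2^ℵ₀`: for every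
nonempty countable partial order `P` and every family of `κ` many dense subsets of `P`, there
is a filter `G ⊆ P` meeting every member of the family. -/
theorem stmt12 (h : covMeagre = 2 ^ aleph0) (κ : Cardinal) (hκ : κ < 2 ^ aleph0)
    (P : Type) [PartialOrder P] [Countable P] [Nonempty P]
    (ι : Type) (hι : #ι = κ) (D : ι → Set P) (hD : ∀ i, ∀ p : P, ∃ q ∈ D i, q ≤ p) :
    ∃ G : Set P,
      (∀ p ∈ G, ∀ q : P, p ≤ q → q ∈ G) ∧
      (∀ p ∈ G, ∀ q ∈ G, ∃ r ∈ G, r ≤ p ∧ r ≤ q) ∧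
      (∀ i, ∃ p ∈ G, p ∈ D i) := by
  obtain ⟨e, he⟩ := exists_surjective_nat P
  set N : ι → Set ℝ := fun i => {r : ℝ | ∀ m, seqX e (dig r) m ∉ D i} with hN
  have hmeagre : ∀ i, IsMeagre (N i) := by
    intro i
    rw [isMeagre_iff_countable_union_isNowhereDense]
    exact ⟨{N i}, by simpa using isNowhereDense_bad e he (D i) (hD i),
      Set.countable_singleton _, by simp⟩
  have hr : ∃ r : ℝ, ∀ i, r ∉ N i := by
    by_contra hcon
    push_neg at hcon
    have hcov : ⋃₀ Set.range N = Set.univ := by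
      rw [Set.eq_univ_iff_forall]
      intro r
      obtain ⟨i, hi⟩ := hcon r
      exact ⟨N i, Set.mem_range_self i, hi⟩
    have hle : covMeagre ≤ #(Set.range N) := by
      apply csInf_le'
      refine ⟨Set.range N, ?_, hcov, rfl⟩
      rintro s ⟨i, rfl⟩
      exact hmeagre i
    have : covMeagre ≤ κ := hle.trans (by rw [← hι]; exact Cardinal.mk_range_le)
    rw [h] at this
    exact absurd (this.trans_lt hκ) (lt_irrefl _)
  obtain ⟨r, hrN⟩ := hr
  have hmeets : ∀ i, ∃ m, seqX e (dig r) m ∈ D i := by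
    intro i
    have := hrN i
    rw [hN] at this
    simpa using this
  refine ⟨{q | ∃ m, seqX e (dig r) m ≤ q}, ?_, ?_, ?_⟩
  · rintro p ⟨m, hm⟩ q hpq
    exact ⟨m, hm.trans hpq⟩
  · rintro p ⟨m, hm⟩ q ⟨m', hm'⟩
    refine ⟨seqX e (dig r) (max m m'), ⟨max m m', le_rfl⟩, ?_, ?_⟩
    · exact (seqX_le e _ (le_max_left m m')).trans hm
    · exact (seqX_le e _ (le_max_right m m')).trans hm'
  · intro i
    obtain ⟨m, hm⟩ := hmeets i
    exact ⟨seqX e (dig r) m, ⟨m, le_rfl⟩, hm⟩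
end
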